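/- arXiv:math/0512254 — 3 statements merged into one kernel-verified Lean document; each statement's English description precedes it below -/
import Mathlib

section
/- Let (Λ,d) be a 2-graph satisfying condition (3.1). Then every vertex v lies on exactly one isolated cycle in the red graph, v is the range of exactly one red edge and the source of exactly one red edge, and Λ is locally convex: whenever e is a blue edge and f is a red edge with r(e) = r(f), there exist a red edge f' with r(f') = s(e) and a blue edge e' with r(e') = s(f). -/
open scoped ENNReal

/-- A rank-2 graph (`2`-graph): a countable category whose morphisms (paths) carry a
degree functor `d : Path → ℕ × ℕ` satisfying the unique factorisation property.
Vertices are identified with the paths of degree `(0,0)`; composition is a total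
function whose behaviour is constrained only on composable pairs (`s p = r q`). -/
structure TwoGraph where
  Path : Type
  countable : Countable Path
  d : Path → ℕ × ℕ
  r : Path → Path
  s : Path → Path
  comp : Path → Path → Path
  d_r : ∀ p, d (r p) = 0
  d_s : ∀ p, d (s p) = 0
  r_vertex : ∀ p, d p = 0 → r p = p
  s_vertex : ∀ p, d p = 0 → s p = p
  id_comp : ∀ p, comp (r p) p = p
  comp_id : ∀ p, comp p (s p) = p
  r_comp : ∀ p q, s p = r q → r (comp p q) = r p
  s_comp : ∀ p q, s p = r q → s (comp p q) = s q
  d_comp : ∀ p q, s p = r q → d (comp p q) = d p + d q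
  comp_assoc : ∀ p q t, s p = r q → s q = r t → comp (comp p q) t = comp p (comp q t)
  factor : ∀ (lam : Path) (m n : ℕ × ℕ), d lam = m + n →
    ∃! mn : Path × Path,
      d mn.1 = m ∧ d mn.2 = n ∧ s mn.1 = r mn.2 ∧ comp mn.1 mn.2 = lam

namespace TwoGraph

variable (G : TwoGraph)

/-- Vertices are the paths of degree `0`. -/
def IsVertex (p : G.Path) : Prop := G.d p = 0

/-- A blue path: one whose degree lies in `ℕ e₁`. -/
def IsBlue (p : G.Path) : Prop := (G.d p).2 = 0

/-- A red path: one whose degree lies in `ℕ e₂`. -/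
def IsRed (p : G.Path) : Prop := (G.d p).1 = 0

/-- A blue edge: a path of degree `e₁ = (1,0)`. -/
def IsBlueEdge (p : G.Path) : Prop := G.d p = (1, 0)

/-- A red edge: a path of degree `e₂ = (0,1)`. -/
def IsRedEdge (p : G.Path) : Prop := G.d p = (0, 1)

/-- `Λ` is row-finite: `vΛⁿ` is finite for every vertex `v` and degree `n`. -/
def RowFinite : Prop :=
  ∀ (v : G.Path) (n : ℕ × ℕ), G.IsVertex v →
    {p : G.Path | G.r p = v ∧ G.d p = n}.Finite

/-- `Λ` is a finite `2`-graph: `Λⁿ` is finite for every degree `n`. -/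
def FinitePaths : Prop := ∀ n : ℕ × ℕ, {p : G.Path | G.d p = n}.Finite

/-- `μ` is an initial segment of `lam`, i.e. `lam = μ ν` for some `ν`. -/
def InitSeg (μ lam : G.Path) : Prop := ∃ ν, G.s μ = G.r ν ∧ G.comp μ ν = lam

/-- `μ` is a final segment of `lam`, i.e. `lam = ν μ` for some `ν`. -/
def FinalSeg (μ lam : G.Path) : Prop := ∃ ν, G.s ν = G.r μ ∧ G.comp ν μ = lam

/-- The vertex `v` lies on the path `lam`, i.e. `v = lam(n)` for some `0 ≤ n ≤ d lam`. -/
def OnPath (lam v : G.Path) : Prop :=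
  G.IsVertex v ∧ ∃ μ, G.InitSeg μ lam ∧ G.s μ = v

/-- A cycle: `d lam ≠ 0`, `r lam = s lam`, and `lam(n) ≠ s lam` for `0 < n < d lam`. -/
def IsCycle (lam : G.Path) : Prop :=
  G.d lam ≠ 0 ∧ G.r lam = G.s lam ∧
    ∀ μ, G.InitSeg μ lam → G.d μ ≠ 0 → G.d μ ≠ G.d lam → G.s μ ≠ G.s lam

/-- `lam` has no entrance: for `n ≤ d lam`, every path of degree `n` with range `r lam`
is the initial segment `lam(0,n)`. -/
def HasNoEntrance (lam : G.Path) : Prop :=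
  ∀ n : ℕ × ℕ, n ≤ G.d lam → ∀ μ, G.d μ = n → G.r μ = G.r lam → G.InitSeg μ lam

/-- `lam` has no exit: for `n ≤ d lam`, every path of degree `n` with source `s lam`
is the final segment `lam(d lam - n, d lam)`. -/
def HasNoExit (lam : G.Path) : Prop :=
  ∀ n : ℕ × ℕ, n ≤ G.d lam → ∀ μ, G.d μ = n → G.s μ = G.s lam → G.FinalSeg μ lam

/-- An isolated cycle: no entrances and no exits. -/
def IsIsolated (lam : G.Path) : Prop := G.HasNoEntrance lam ∧ G.HasNoExit lam

/-- An isolated cycle in the red graph. -/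
def IsIsolatedRedCycle (lam : G.Path) : Prop :=
  G.IsRed lam ∧ G.IsCycle lam ∧ G.IsIsolated lam

/-- Condition (3.1): `Λ` is row-finite, the blue graph contains no cycles, and each
vertex is the range of an isolated cycle in the red graph. -/
def Cond31 : Prop :=
  G.RowFinite ∧ (∀ p, G.IsBlue p → ¬ G.IsCycle p) ∧
    ∀ v, G.IsVertex v → ∃ lam, G.IsIsolatedRedCycle lam ∧ G.r lam = v

/-- A source of the blue graph: a vertex receiving no blue edges. -/
def IsBlueSource (v : G.Path) : Prop :=
  G.IsVertex v ∧ ∀ e, G.IsBlueEdge e → G.r e ≠ v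

/-- A sink of the blue graph: a vertex emitting no blue edges. -/
def IsBlueSink (v : G.Path) : Prop :=
  G.IsVertex v ∧ ∀ e, G.IsBlueEdge e → G.s e ≠ v

/-- `Λ^{≤ n}`. -/
def LeSet (n : ℕ × ℕ) : Set G.Path :=
  {lam | G.d lam ≤ n ∧
    ∀ μ, G.s lam = G.r μ → G.comp lam μ ≠ lam → ¬ G.d (G.comp lam μ) ≤ n}

/-- `IsSwap ρ τ τ' ρ'` says that `(τ', ρ') = 𝓕(ρ, τ)` is the factorisation of `ρτ`
with the degrees in the reversed order: `τ'ρ' = ρτ`, `d τ' = d τ` and `d ρ' = d ρ`. -/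
def IsSwap (ρ τ τ' ρ' : G.Path) : Prop :=
  G.s ρ = G.r τ ∧ G.s τ' = G.r ρ' ∧ G.d τ' = G.d τ ∧ G.d ρ' = G.d ρ ∧
    G.comp τ' ρ' = G.comp ρ τ

/-- The edge `e` occurs at position `n` in the red path `μ`. -/
def OccAt (μ e : G.Path) (n : ℕ) : Prop :=
  ∃ ρ ξ, G.d ρ = (0, n) ∧ G.s ρ = G.r e ∧ G.s e = G.r ξ ∧
    G.comp ρ (G.comp e ξ) = μ

/-- `⟨μ, e⟩`: the number of occurrences of the red edge `e` in the red path `μ`. -/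
noncomputable def occCount (μ e : G.Path) : ℕ :=
  Nat.card {n : ℕ // G.OccAt μ e n}

/-- Membership in `Y = (blue Λ)S`: a blue path whose source is a source of the
blue graph. -/
def InY (α : G.Path) : Prop := G.IsBlue α ∧ G.IsBlueSource (G.s α)

/-- One step of the factorisation permutation `𝓕` of the blue paths of a GBD:
`α' = 𝓕(α)` iff `f α = α' f'` for (the) red edges `f, f'` with `s f = r α`. -/
def FStep (α α' : G.Path) : Prop :=
  G.IsBlue α ∧ G.IsBlue α' ∧
    ∃ f f', G.IsRedEdge f ∧ G.IsRedEdge f' ∧ G.s f = G.r α ∧ G.s α' = G.r f' ∧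
      G.comp f α = G.comp α' f'

end TwoGraph

/-- `k`-fold iteration of the factorisation permutation, as a relation. -/
def TwoGraph.FIter (G : TwoGraph) : ℕ → G.Path → G.Path → Prop
  | 0, α, α' => α = α'
  | k + 1, α, α' => ∃ β, G.FStep α β ∧ TwoGraph.FIter G k β α'

namespace TwoGraph

variable (G : TwoGraph)

/-- `o(α) = k`: `k` is the order of the blue path `α` under the factorisation
permutation `𝓕`. -/
def HasOrder (α : G.Path) (k : ℕ) : Prop :=
  0 < k ∧ G.FIter k α α ∧ ∀ m, 0 < m → m < k → ¬ G.FIter m α α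

end TwoGraph

/-- `IsChainComp [e₁, …, eₙ] β` says `β = e₁ e₂ ⋯ eₙ`. -/
def TwoGraph.IsChainComp (G : TwoGraph) : List G.Path → G.Path → Prop
  | [], β => G.IsVertex β
  | e :: l, β => ∃ γ, TwoGraph.IsChainComp G l γ ∧ G.s e = G.r γ ∧ β = G.comp e γ

/-- `cyclePow lam m = lam^m`, the `m`-fold concatenation of the cycle `lam`,
with `lam^0 = s lam`. -/
def TwoGraph.cyclePow (G : TwoGraph) (lam : G.Path) : ℕ → G.Path
  | 0 => G.s lam
  | m + 1 => G.comp lam (TwoGraph.cyclePow G lam m)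

namespace TwoGraph

variable (G : TwoGraph)

/-! ### Relative (sub-2-graph) versions of the basic notions -/

/-- `μ` is an initial segment of `lam` within `P`. -/
def InitSegIn (P : Set G.Path) (μ lam : G.Path) : Prop :=
  ∃ ν ∈ P, G.s μ = G.r ν ∧ G.comp μ ν = lam

/-- `μ` is a final segment of `lam` within `P`. -/
def FinalSegIn (P : Set G.Path) (μ lam : G.Path) : Prop :=
  ∃ ν ∈ P, G.s ν = G.r μ ∧ G.comp ν μ = lam

/-- A cycle of the sub-2-graph with path-set `P`. -/
def IsCycleIn (P : Set G.Path) (lam : G.Path) : Prop :=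
  lam ∈ P ∧ G.d lam ≠ 0 ∧ G.r lam = G.s lam ∧
    ∀ μ ∈ P, G.InitSegIn P μ lam → G.d μ ≠ 0 → G.d μ ≠ G.d lam → G.s μ ≠ G.s lam

def HasNoEntranceIn (P : Set G.Path) (lam : G.Path) : Prop :=
  ∀ n : ℕ × ℕ, n ≤ G.d lam → ∀ μ ∈ P, G.d μ = n → G.r μ = G.r lam → G.InitSegIn P μ lam

def HasNoExitIn (P : Set G.Path) (lam : G.Path) : Prop :=
  ∀ n : ℕ × ℕ, n ≤ G.d lam → ∀ μ ∈ P, G.d μ = n → G.s μ = G.s lam → G.FinalSegIn P μ lam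

/-- An isolated cycle of the red graph of the sub-2-graph with path-set `P`. -/
def IsIsolatedRedCycleIn (P : Set G.Path) (lam : G.Path) : Prop :=
  lam ∈ P ∧ G.IsRed lam ∧ G.IsCycleIn P lam ∧
    G.HasNoEntranceIn P lam ∧ G.HasNoExitIn P lam

def RowFiniteIn (P : Set G.Path) : Prop :=
  ∀ (v : G.Path) (n : ℕ × ℕ), G.IsVertex v →
    {p : G.Path | p ∈ P ∧ G.r p = v ∧ G.d p = n}.Finite

/-- A source of the blue graph of the sub-2-graph with path-set `P`. -/
def IsBlueSourceIn (P : Set G.Path) (v : G.Path) : Prop :=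
  v ∈ P ∧ G.IsVertex v ∧ ∀ e ∈ P, G.IsBlueEdge e → G.r e ≠ v

/-- Condition (3.1) for the sub-2-graph with path-set `P`. -/
def Cond31In (P : Set G.Path) : Prop :=
  G.RowFiniteIn P ∧ (∀ p ∈ P, G.IsBlue p → ¬ G.IsCycleIn P p) ∧
    ∀ v ∈ P, G.IsVertex v → ∃ lam, G.IsIsolatedRedCycleIn P lam ∧ G.r lam = v

/-- `Λ_j = {λ ∈ Λ : s(λ) Λ W ≠ ∅}`: the paths admitting a path from their source
into the vertex set `W`. -/
def subGraphTo (W : Set G.Path) : Set G.Path :=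
  {p | ∃ μ, G.r μ = G.s p ∧ G.s μ ∈ W}

/-- `Λ` has large-permutation factorisations. -/
def HasLPF : Prop :=
  ∀ v, G.IsVertex v → ∀ l : ℕ, 0 < l → ∃ N : ℕ,
    ∀ α, G.IsBlue α → G.r α = v → G.d α = (N, 0) →
      ∀ k, G.HasOrder α k → l < k

end TwoGraph

/-- A generalised Bratteli diagram of depth `N ∈ ℕ ∪ {∞}` with vertex decomposition
`Λ⁰ = ⊔ₙ V n`. -/
structure IsGBD (G : TwoGraph) (N : ℕ∞) (V : ℕ → Set G.Path) : Prop where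
  rowFinite : G.RowFinite
  level_nonempty : ∀ n : ℕ, (n : ℕ∞) ≤ N → (V n).Nonempty
  level_finite : ∀ n : ℕ, (V n).Finite
  level_empty : ∀ n : ℕ, ¬ ((n : ℕ∞) ≤ N) → V n = ∅
  level_vertex : ∀ n, V n ⊆ {v | G.IsVertex v}
  cover : ∀ v, G.IsVertex v → ∃ n, v ∈ V n
  level_disjoint : ∀ m n, m ≠ n → Disjoint (V m) (V n)
  blue_level : ∀ e, G.IsBlueEdge e → ∃ n, G.r e ∈ V n ∧ G.s e ∈ V (n + 1)
  sinks_bottom : ∀ v, G.IsBlueSink v → v ∈ V 0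
  sources_top : ∀ v, G.IsBlueSource v → ∃ n : ℕ, (n : ℕ∞) = N ∧ v ∈ V n
  red_cycle : ∀ v, G.IsVertex v → ∃ lam, G.IsIsolatedRedCycle lam ∧ G.r lam = v
  red_level : ∀ f, G.IsRedEdge f → ∃ n, G.r f ∈ V n ∧ G.s f ∈ V n

/-- The sub-2-graph `Λ_N` of paths joining vertices in the first `N` levels. -/
def levelPaths (G : TwoGraph) (V : ℕ → Set G.Path) (N : ℕ) : Set G.Path :=
  {p | (∃ n ≤ N, G.r p ∈ V n) ∧ (∃ n ≤ N, G.s p ∈ V n)}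

/-- An infinite path in a 2-graph: a degree-preserving functor `Ω₂ → Λ`, recorded by
its segments `x(m,n)` for `m ≤ n` in `ℕ × ℕ`. -/
structure InfPath (G : TwoGraph) where
  seg : ℕ × ℕ → ℕ × ℕ → G.Path
  deg : ∀ m n : ℕ × ℕ, m ≤ n → G.d (seg m n) = n - m
  range_seg : ∀ m n : ℕ × ℕ, m ≤ n → G.r (seg m n) = seg m m
  source_seg : ∀ m n : ℕ × ℕ, m ≤ n → G.s (seg m n) = seg n n
  comp_seg : ∀ m n p : ℕ × ℕ, m ≤ n → n ≤ p → G.comp (seg m n) (seg n p) = seg m p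

/-- A Cuntz–Krieger `Λ`-family in a C*-algebra `A`. -/
structure CKFamily (G : TwoGraph) (A : Type*) [CStarAlgebra A] where
  S : G.Path → A
  ck1_sa : ∀ v, G.IsVertex v → star (S v) = S v
  ck1_idem : ∀ v, G.IsVertex v → S v * S v = S v
  ck1_orth : ∀ v w, G.IsVertex v → G.IsVertex w → v ≠ w → S v * S w = 0
  ck2 : ∀ p q, G.s p = G.r q → S p * S q = S (G.comp p q)
  ck3 : ∀ p, star (S p) * S p = S (G.s p)
  ck4 : ∀ (v : G.Path) (n : ℕ × ℕ), G.IsVertex v →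
    S v = ∑ᶠ lam ∈ {lam : G.Path | lam ∈ G.LeSet n ∧ G.r lam = v},
      S lam * star (S lam)

section CStar

variable {A : Type*} [CStarAlgebra A]

/-- The C*-subalgebra (as a subset) of `A` generated by a set `SS`. -/
def generatedCStar (SS : Set A) : Set A :=
  closure (NonUnitalStarAlgebra.adjoin ℂ SS : Set A)

/-- `P` is full in the C*-algebra `Bset ⊆ A`: every closed two-sided ideal of `Bset`
containing `P` is all of `Bset`. -/
def FullIn (Bset : Set A) (P : A) : Prop :=
  ∀ I : Set A, I ⊆ Bset → IsClosed I →
    (∀ x ∈ I, ∀ y ∈ I, x + y ∈ I) → (∀ (c : ℂ), ∀ x ∈ I, c • x ∈ I) →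
    (∀ a ∈ Bset, ∀ x ∈ I, a * x ∈ I ∧ x * a ∈ I) →
    P ∈ I → Bset ⊆ I

/-- The sum `∑_{v ∈ Λ⁰} s_v`, which is the unit of `C*(Λ)` for finite `Λ`. -/
noncomputable def ckUnit (G : TwoGraph) (F : CKFamily G A) : A :=
  ∑ᶠ v ∈ {v : G.Path | G.IsVertex v}, F.S v

/-- The canonical unitary `U = ∑_{α ∈ Y} s_α s_{λ(α)} s_α*`. -/
noncomputable def ckU (G : TwoGraph) (F : CKFamily G A) (lam : G.Path → G.Path) : A :=
  ∑ᶠ α ∈ {α : G.Path | G.InY α}, F.S α * F.S (lam α) * star (F.S α)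

/-- The gauge action: for every `z ∈ 𝕋²` there is a *-automorphism `γ_z` of the
C*-subalgebra generated by the family with `γ_z(s_λ) = z^{d(λ)} s_λ`. -/
def GaugeInvariant (G : TwoGraph) (F : CKFamily G A) : Prop :=
  ∀ z₁ z₂ : ℂ, ‖z₁‖ = 1 → ‖z₂‖ = 1 → ∃ γ : A → A,
    Set.BijOn γ (generatedCStar (Set.range F.S)) (generatedCStar (Set.range F.S)) ∧
    (∀ x ∈ generatedCStar (Set.range F.S), ∀ y ∈ generatedCStar (Set.range F.S),
      γ (x + y) = γ x + γ y ∧ γ (x * y) = γ x * γ y) ∧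
    (∀ x ∈ generatedCStar (Set.range F.S), γ (star x) = star (γ x)) ∧
    (∀ (c : ℂ), ∀ x ∈ generatedCStar (Set.range F.S), γ (c • x) = c • γ x) ∧
    (∀ p : G.Path, γ (F.S p) = (z₁ ^ (G.d p).1 * z₂ ^ (G.d p).2) • F.S p)

end CStar

/-! In a 2-graph satisfying (3.1), each vertex `v` carries an isolated red cycle `λ(v)`.
Having no entrance means that every path of degree at most `d λ(v)` ending at `v` is an
initial segment of `λ(v)`, and initial segments of a given degree are unique by the
factorisation property; this gives uniqueness of the red edge into `v` (and dually, by the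
absence of exits, out of `v`), and it forces a second isolated red cycle at `v`, which is
comparable in length, to be an initial segment of `λ(v)` returning to `v`, hence `λ(v)` itself.
For local convexity, the red edge `f` into `r(e)` starts `λ(r(e)) = fν`, and factorising `νe`
with its blue edge first yields a blue edge with range `s(f)`. -/

namespace TwoGraph

variable {G : TwoGraph}

lemma InitSeg.r_eq {μ lam : G.Path} (h : G.InitSeg μ lam) : G.r μ = G.r lam := by
  obtain ⟨ν, hs, rfl⟩ := h
  exact (G.r_comp μ ν hs).symm

lemma FinalSeg.s_eq {μ lam : G.Path} (h : G.FinalSeg μ lam) : G.s μ = G.s lam := by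
  obtain ⟨ν, hs, rfl⟩ := h
  exact (G.s_comp ν μ hs).symm

lemma initSeg_self (lam : G.Path) : G.InitSeg lam lam :=
  ⟨G.s lam, (G.r_vertex _ (G.d_s lam)).symm, G.comp_id lam⟩

lemma InitSeg.eq_of_d_eq {μ μ' lam : G.Path} (h : G.InitSeg μ lam) (h' : G.InitSeg μ' lam)
    (hd : G.d μ = G.d μ') : μ = μ' := by
  obtain ⟨ν, hs, rfl⟩ := h
  obtain ⟨ν', hs', heq⟩ := h'
  have hdν : G.d ν' = G.d ν := by
    have := G.d_comp μ' ν' hs'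
    rw [heq, G.d_comp μ ν hs, hd] at this
    exact (add_left_cancel this).symm
  exact congrArg Prod.fst <|
    (G.factor _ _ _ (G.d_comp μ ν hs)).unique (y₁ := (μ, ν)) (y₂ := (μ', ν'))
      ⟨rfl, rfl, hs, rfl⟩ ⟨hd.symm, hdν, hs', heq⟩

lemma FinalSeg.eq_of_d_eq {μ μ' lam : G.Path} (h : G.FinalSeg μ lam) (h' : G.FinalSeg μ' lam)
    (hd : G.d μ = G.d μ') : μ = μ' := by
  obtain ⟨ν, hs, rfl⟩ := h
  obtain ⟨ν', hs', heq⟩ := h'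
  have hdν : G.d ν' = G.d ν := by
    have := G.d_comp ν' μ' hs'
    rw [heq, G.d_comp ν μ hs, hd] at this
    exact (add_right_cancel this).symm
  exact congrArg Prod.snd <|
    (G.factor _ _ _ (G.d_comp ν μ hs)).unique (y₁ := (ν, μ)) (y₂ := (ν', μ'))
      ⟨rfl, rfl, hs, rfl⟩ ⟨hdν, hd.symm, hs', heq⟩

lemma exists_initSeg_d_eq {lam : G.Path} {n : ℕ × ℕ} (hn : n ≤ G.d lam) :
    ∃ μ, G.InitSeg μ lam ∧ G.d μ = n := by
  obtain ⟨⟨μ, ν⟩, ⟨hμ, -, hs, hcomp⟩, -⟩ :=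
    G.factor lam n (G.d lam - n) (add_tsub_cancel_of_le hn).symm
  exact ⟨μ, ⟨ν, hs, hcomp⟩, hμ⟩

lemma exists_finalSeg_d_eq {lam : G.Path} {n : ℕ × ℕ} (hn : n ≤ G.d lam) :
    ∃ μ, G.FinalSeg μ lam ∧ G.d μ = n := by
  obtain ⟨⟨ν, μ⟩, ⟨-, hμ, hs, hcomp⟩, -⟩ :=
    G.factor lam (G.d lam - n) n (tsub_add_cancel_of_le hn).symm
  exact ⟨μ, ⟨ν, hs, hcomp⟩, hμ⟩

lemma HasNoEntrance.existsUnique {lam : G.Path} (h : G.HasNoEntrance lam) {n : ℕ × ℕ}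
    (hn : n ≤ G.d lam) : ∃! μ, G.d μ = n ∧ G.r μ = G.r lam := by
  obtain ⟨μ, hμ, hd⟩ := exists_initSeg_d_eq hn
  exact ⟨μ, ⟨hd, hμ.r_eq⟩, fun μ' ⟨hd', hr'⟩ =>
    (h n hn μ' hd' hr').eq_of_d_eq hμ (hd'.trans hd.symm)⟩

lemma HasNoExit.existsUnique {lam : G.Path} (h : G.HasNoExit lam) {n : ℕ × ℕ}
    (hn : n ≤ G.d lam) : ∃! μ, G.d μ = n ∧ G.s μ = G.s lam := by
  obtain ⟨μ, hμ, hd⟩ := exists_finalSeg_d_eq hn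
  exact ⟨μ, ⟨hd, hμ.s_eq⟩, fun μ' ⟨hd', hs'⟩ =>
    (h n hn μ' hd' hs').eq_of_d_eq hμ (hd'.trans hd.symm)⟩

lemma HasNoEntrance.exists_r_eq_s {lam μ e : G.Path} (h : G.HasNoEntrance lam)
    (hcyc : G.r lam = G.s lam) (hμ : G.d μ ≤ G.d lam) (hμr : G.r μ = G.r lam)
    (her : G.r e = G.r lam) : ∃ ε, G.d ε = G.d e ∧ G.r ε = G.s μ := by
  obtain ⟨ν, hs, hcomp⟩ := h _ hμ μ rfl hμr
  have hνe : G.s ν = G.r e := by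
    rw [her, hcyc, ← hcomp, G.s_comp μ ν hs]
  obtain ⟨⟨ε, ν'⟩, ⟨hε, -, hs', hcomp'⟩, -⟩ :=
    G.factor (G.comp ν e) (G.d e) (G.d ν) (by rw [G.d_comp ν e hνe, add_comm])
  refine ⟨ε, hε, ?_⟩
  rw [hs, ← G.r_comp ν e hνe, ← hcomp', G.r_comp ε ν' hs']

lemma IsCycle.eq_of_hasNoEntrance {lam lam' : G.Path} (hc : G.IsCycle lam)
    (hc' : G.IsCycle lam') (hne : G.HasNoEntrance lam') (hr : G.r lam = G.r lam')
    (hle : G.d lam ≤ G.d lam') : lam = lam' := by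
  have hseg : G.InitSeg lam lam' := hne _ hle lam rfl hr
  have hd : G.d lam = G.d lam' := by
    by_contra hne'
    exact hc'.2.2 lam hseg hc.1 hne' (by rw [← hc.2.1, hr, hc'.2.1])
  exact hseg.eq_of_d_eq (initSeg_self lam') hd

lemma d_le_total_of_isRed {p q : G.Path} (hp : G.IsRed p) (hq : G.IsRed q) :
    G.d p ≤ G.d q ∨ G.d q ≤ G.d p := by
  rcases le_total (G.d p).2 (G.d q).2 with h | h
  · exact .inl (Prod.le_def.mpr ⟨hp.le.trans (Nat.zero_le _), h⟩)
  · exact .inr (Prod.le_def.mpr ⟨hq.le.trans (Nat.zero_le _), h⟩)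

lemma IsIsolatedRedCycle.eq {lam lam' : G.Path} (h : G.IsIsolatedRedCycle lam)
    (h' : G.IsIsolatedRedCycle lam') (hr : G.r lam = G.r lam') : lam = lam' := by
  rcases d_le_total_of_isRed h.1 h'.1 with hle | hle
  · exact h.2.1.eq_of_hasNoEntrance h'.2.1 h'.2.2.1 hr hle
  · exact (h'.2.1.eq_of_hasNoEntrance h.2.1 h.2.2.1 hr.symm hle).symm

lemma IsIsolatedRedCycle.redEdge_le {lam : G.Path} (h : G.IsIsolatedRedCycle lam) :
    ((0, 1) : ℕ × ℕ) ≤ G.d lam := by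
  have hred : (G.d lam).1 = 0 := h.1
  have hne : G.d lam ≠ 0 := h.2.1.1
  refine Prod.le_def.mpr ⟨Nat.zero_le _, Nat.one_le_iff_ne_zero.mpr fun h2 => hne ?_⟩
  exact Prod.ext hred h2

end TwoGraph

/-- In a 2-graph satisfying condition (3.1), every vertex lies on
exactly one isolated red cycle, is the range of exactly one red edge and the source of
exactly one red edge, and the 2-graph is locally convex. -/
theorem stmt0 (G : TwoGraph) (h31 : G.Cond31) :
    (∀ v, G.IsVertex v →
      (∃! lam, G.IsIsolatedRedCycle lam ∧ G.r lam = v) ∧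
      (∃! f, G.IsRedEdge f ∧ G.r f = v) ∧
      (∃! f, G.IsRedEdge f ∧ G.s f = v)) ∧
    (∀ e f, G.IsBlueEdge e → G.IsRedEdge f → G.r e = G.r f →
      (∃ f', G.IsRedEdge f' ∧ G.r f' = G.s e) ∧
      (∃ e', G.IsBlueEdge e' ∧ G.r e' = G.s f)) := by
  have at_vertex : ∀ v, G.IsVertex v →
      (∃! lam, G.IsIsolatedRedCycle lam ∧ G.r lam = v) ∧
      (∃! f, G.IsRedEdge f ∧ G.r f = v) ∧
      (∃! f, G.IsRedEdge f ∧ G.s f = v) := by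
    intro v hv
    obtain ⟨lam, hlam, rfl⟩ := h31.2.2 v hv
    obtain ⟨-, ⟨-, hrs, -⟩, hent, hexit⟩ := id hlam
    refine ⟨⟨lam, ⟨hlam, rfl⟩, fun lam' ⟨hlam', hr⟩ => hlam'.eq hlam hr⟩,
      hent.existsUnique hlam.redEdge_le, ?_⟩
    rw [hrs]
    exact hexit.existsUnique hlam.redEdge_le
  refine ⟨at_vertex, fun e f he hf hre => ⟨?_, ?_⟩⟩
  · obtain ⟨f', hf', -⟩ := (at_vertex (G.s e) (G.d_s e)).2.1
    exact ⟨f', hf'⟩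
  · obtain ⟨lam, hlam, hr⟩ := h31.2.2 (G.r f) (G.d_r f)
    obtain ⟨-, ⟨-, hrs, -⟩, hent, -⟩ := id hlam
    obtain ⟨e', hd, hr'⟩ :=
      hent.exists_r_eq_s hrs (hf ▸ hlam.redEdge_le) hr.symm (hre.trans hr.symm)
    exact ⟨e', hd.trans he, hr'⟩
end

section
/- Let (Λ,d) be a 2-graph satisfying condition (3.1), and let λ₁ and λ₂ be isolated cycles in the red graph with vertex sets V₁ and V₂ respectively. (1) For every red path μ with r(μ) ∈ V₁, the map σ ↦ F₁(μ,σ) is a degree-preserving bijection from s(μ)(blue Λ)V₂ (blue paths with range s(μ) and source in V₂) onto r(μ)(blue Λ)V₂. (2) For every red path ν with r(ν) ∈ V₂, the map σ ↦ F₂(σ,ν) is a degree-preserving bijection from V₁(blue Λ)r(ν) onto V₁(blue Λ)s(ν). -/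
open scoped ENNReal

/-! On an isolated red cycle every vertex receives exactly one red path of each degree, and the
sources of these paths stay on the cycle; applied in the opposite 2-graph, the same holds for
red paths leaving the cycle. In `μσ = σ'ρ'` the red factor `ρ'` ends at `s σ'` on `λ₂`, so it
is determined by `σ'`, and unique factorisation of `μσ` makes `σ ↦ σ'` injective. Conversely,
refactorising `σ'ρ'` as `μ₀σ` gives a red `μ₀` of degree `d μ` ending at `r μ` on `λ₁`, which
forces `μ₀ = μ`. Part (2) is part (1) in the opposite 2-graph. -/

theorem Relator.exists_bijective_of_biTotal_of_biUnique {α β : Type*} {R : α → β → Prop}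
    (ht : Relator.BiTotal R) (hu : Relator.BiUnique R) :
    ∃ f : α → β, Function.Bijective f ∧ ∀ a, R a (f a) := by
  choose f hf using ht.1
  refine ⟨f, ⟨fun a b hab => hu.1 (hf a) (hab ▸ hf b), fun b => ?_⟩, hf⟩
  obtain ⟨a, ha⟩ := ht.2 b
  exact ⟨a, hu.2 (hf a) ha⟩

namespace TwoGraph

def op (G : TwoGraph) : TwoGraph where
  Path := G.Path
  countable := G.countable
  d := G.d
  r := G.s
  s := G.r
  comp p q := G.comp q p
  d_r := G.d_s
  d_s := G.d_r
  r_vertex := G.s_vertex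
  s_vertex := G.r_vertex
  id_comp := G.comp_id
  comp_id := G.id_comp
  r_comp p q h := G.s_comp q p h.symm
  s_comp p q h := G.r_comp q p h.symm
  d_comp p q h := by rw [G.d_comp q p h.symm, add_comm]
  comp_assoc p q t hpq hqt := (G.comp_assoc t q p hqt.symm hpq.symm).symm
  factor lam m n h := by
    obtain ⟨⟨a, b⟩, ⟨ha, hb, hab, hc⟩, huniq⟩ := G.factor lam n m (by rw [h, add_comm])
    refine ⟨(b, a), ⟨hb, ha, hab.symm, hc⟩, fun ⟨x, y⟩ ⟨hx, hy, hxy, hc'⟩ => ?_⟩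
    have := huniq (y, x) ⟨hy, hx, hxy.symm, hc'⟩
    simp_all

variable {G : TwoGraph}

theorem onPath_op_iff {lam v : G.Path} : G.op.OnPath lam v ↔ G.OnPath lam v := by
  constructor
  · rintro ⟨hv, μ, ⟨ν, hμν, hc⟩, rfl⟩
    exact ⟨hv, ν, ⟨μ, hμν.symm, hc⟩, hμν.symm⟩
  · rintro ⟨hv, κ, ⟨ν, hκν, hc⟩, rfl⟩
    exact ⟨hv, ν, ⟨κ, hκν.symm, hc⟩, hκν.symm⟩

theorem isSwap_op_iff {ρ τ τ' ρ' : G.Path} : G.op.IsSwap ρ τ τ' ρ' ↔ G.IsSwap τ ρ ρ' τ' :=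
  ⟨fun ⟨h₁, h₂, h₃, h₄, h₅⟩ => ⟨h₁.symm, h₂.symm, h₄, h₃, h₅⟩,
    fun ⟨h₁, h₂, h₃, h₄, h₅⟩ => ⟨h₁.symm, h₂.symm, h₄, h₃, h₅⟩⟩

theorem IsCycle.op {lam : G.Path} (hl : G.IsCycle lam) : G.op.IsCycle lam := by
  refine ⟨hl.1, hl.2.1.symm, fun (μ : G.Path) ⟨(ν : G.Path), (hμν : G.r μ = G.s ν),
    (hc : G.comp ν μ = lam)⟩ (hμ0 : G.d μ ≠ 0) (hμlam : G.d μ ≠ G.d lam)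
    (hr : G.r μ = G.r lam) => ?_⟩
  have hd : G.d lam = G.d ν + G.d μ := by rw [← hc, G.d_comp ν μ hμν.symm]
  refine hl.2.2 ν ⟨μ, hμν.symm, hc⟩ (fun hν0 => hμlam ?_) (fun hνlam => hμ0 ?_)
    (by rw [← hμν, hr, hl.2.1])
  · rw [hd, hν0, zero_add]
  · rwa [hνlam, left_eq_add] at hd

theorem IsIsolatedRedCycle.op {lam : G.Path} (hl : G.IsIsolatedRedCycle lam) :
    G.op.IsIsolatedRedCycle lam := by
  obtain ⟨hred, hcyc, hent, hexit⟩ := hl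
  refine ⟨hred, hcyc.op, fun n hn μ hμ hs => ?_, fun n hn μ hμ hr => ?_⟩
  · obtain ⟨ν, hνμ, hc⟩ := hexit n hn μ hμ hs
    exact ⟨ν, hνμ.symm, hc⟩
  · obtain ⟨ν, hμν, hc⟩ := hent n hn μ hμ hr
    exact ⟨ν, hμν.symm, hc⟩

theorem factor_unique {p q p' q' : G.Path} (hpq : G.s p = G.r q) (hpq' : G.s p' = G.r q')
    (hd : G.d p = G.d p') (h : G.comp p q = G.comp p' q') : p = p' ∧ q = q' := by
  have hdq : G.d q = G.d q' := by
    rw [← add_right_inj (G.d p), ← G.d_comp p q hpq, h, G.d_comp p' q' hpq', hd]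
  obtain ⟨_, _, huniq⟩ := G.factor (G.comp p q) (G.d p) (G.d q) (G.d_comp p q hpq)
  have h₁ := huniq (p, q) ⟨rfl, rfl, hpq, rfl⟩
  have h₂ := huniq (p', q') ⟨hd.symm, hdq.symm, hpq', h.symm⟩
  exact Prod.ext_iff.1 (h₁.trans h₂.symm)

theorem exists_isSwap {ρ τ : G.Path} (h : G.s ρ = G.r τ) : ∃ τ' ρ', G.IsSwap ρ τ τ' ρ' := by
  obtain ⟨⟨τ', ρ'⟩, ⟨hτ', hρ', hs, hc⟩, -⟩ :=
    G.factor (G.comp ρ τ) (G.d τ) (G.d ρ) (by rw [G.d_comp ρ τ h, add_comm])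
  exact ⟨τ', ρ', h, hs, hτ', hρ', hc⟩

namespace IsSwap

variable {ρ τ τ' ρ' : G.Path}

theorem r_eq (h : G.IsSwap ρ τ τ' ρ') : G.r τ' = G.r ρ := by
  rw [← G.r_comp τ' ρ' h.2.1, h.2.2.2.2, G.r_comp ρ τ h.1]

theorem s_eq (h : G.IsSwap ρ τ τ' ρ') : G.s ρ' = G.s τ := by
  rw [← G.s_comp τ' ρ' h.2.1, h.2.2.2.2, G.s_comp ρ τ h.1]

theorem symm (h : G.IsSwap ρ τ τ' ρ') : G.IsSwap τ' ρ' ρ τ :=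
  ⟨h.2.1, h.1, h.2.2.2.1.symm, h.2.2.1.symm, h.2.2.2.2.symm⟩

theorem unique {τ₂ ρ₂ : G.Path} (h : G.IsSwap ρ τ τ' ρ') (h₂ : G.IsSwap ρ τ τ₂ ρ₂) :
    τ' = τ₂ ∧ ρ' = ρ₂ :=
  factor_unique h.2.1 h₂.2.1 (h.2.2.1.trans h₂.2.2.1.symm) (h.2.2.2.2.trans h₂.2.2.2.2.symm)

end IsSwap

theorem IsRed.d_eq {p : G.Path} (h : G.IsRed p) : G.d p = (0, (G.d p).2) :=
  Prod.ext h rfl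

namespace IsIsolatedRedCycle

variable {lam : G.Path}

theorem exists_split_of_onPath (hl : G.IsIsolatedRedCycle lam) {v : G.Path}
    (hv : G.OnPath lam v) :
    ∃ κ ν, G.s κ = G.r ν ∧ G.comp κ ν = lam ∧ G.s κ = v ∧ G.d ν ≠ 0 := by
  obtain ⟨-, κ, ⟨ν, hκν, hc⟩, rfl⟩ := hv
  by_cases hν : G.d ν = 0
  · obtain rfl : κ = lam := by rw [← hc, ← G.r_vertex ν hν, ← hκν, G.comp_id]
    have hr : G.s (G.r κ) = G.r κ := G.s_vertex _ (G.d_r κ)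
    exact ⟨G.r κ, κ, hr, G.id_comp κ, hr.trans hl.2.1.2.1, hl.2.1.1⟩
  · exact ⟨κ, ν, hκν, hc, rfl, hν⟩

theorem exists_unique_redEdge (hl : G.IsIsolatedRedCycle lam) {v : G.Path}
    (hv : G.OnPath lam v) :
    ∃ e, (G.IsRedEdge e ∧ G.r e = v) ∧ G.OnPath lam (G.s e) ∧
      ∀ e', G.IsRedEdge e' → G.r e' = v → e' = e := by
  obtain ⟨κ, ν, hκν, hc, rfl, hν0⟩ := hl.exists_split_of_onPath hv
  have hd : G.d lam = G.d κ + G.d ν := by rw [← hc, G.d_comp κ ν hκν]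
  have hνred : (G.d ν).1 = 0 := by
    have := hl.1
    rw [IsRed, hd, Prod.fst_add] at this
    omega
  have hν2 : (G.d ν).2 ≠ 0 := fun h => hν0 (Prod.ext hνred h)
  obtain ⟨⟨e, ξ⟩, ⟨he, -, heξ, heξν⟩, -⟩ := G.factor ν (0, 1) (0, (G.d ν).2 - 1)
    (Prod.ext (by simpa using hνred) (by simp; omega))
  have hκe : G.s κ = G.r e := by rw [hκν, ← heξν, G.r_comp e ξ heξ]
  have hκeξ : G.s (G.comp κ e) = G.r ξ := by rw [G.s_comp κ e hκe, heξ]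
  have hlam : G.comp (G.comp κ e) ξ = lam := by rw [G.comp_assoc κ e ξ hκe heξ, heξν, hc]
  refine ⟨e, ⟨he, hκe.symm⟩, ⟨G.d_s e, G.comp κ e, ⟨ξ, hκeξ, hlam⟩, G.s_comp κ e hκe⟩,
    fun e' (he' : G.d e' = (0, 1)) hr' => ?_⟩
  have hκe' : G.s κ = G.r e' := hr'.symm
  have hde : G.d (G.comp κ e') = G.d (G.comp κ e) := by
    rw [G.d_comp κ e' hκe', G.d_comp κ e hκe, he, he']
  -- no entrance: `κ e'` is also an initial segment of `lam`
  obtain ⟨w, hκe'w, hlam'⟩ := hl.2.2.1 _ (by rw [← hlam, G.d_comp _ ξ hκeξ]; exact le_self_add)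
    (G.comp κ e') hde (by rw [G.r_comp κ e' hκe', ← hc, G.r_comp κ ν hκν])
  have hκe'κe := (factor_unique hκe'w hκeξ hde (hlam'.trans hlam.symm)).1
  exact (factor_unique hκe' hκe rfl hκe'κe).2

theorem exists_unique_redPath (hl : G.IsIsolatedRedCycle lam) (k : ℕ) {v : G.Path}
    (hv : G.OnPath lam v) :
    ∃ ρ, (G.d ρ = (0, k) ∧ G.r ρ = v) ∧ G.OnPath lam (G.s ρ) ∧
      ∀ ρ', G.d ρ' = (0, k) → G.r ρ' = v → ρ' = ρ := by
  induction k generalizing v with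
  | zero =>
    have hv0 : G.d v = 0 := hv.1
    refine ⟨v, ⟨hv0, G.r_vertex v hv0⟩, by rwa [G.s_vertex v hv0], fun ρ' hρ' hr => ?_⟩
    rw [← hr, G.r_vertex ρ' hρ']
  | succ k ih =>
    obtain ⟨e, ⟨he, hre⟩, hse, he_uniq⟩ := hl.exists_unique_redEdge hv
    obtain ⟨ρ, ⟨hρ, hrρ⟩, hsρ, hρ_uniq⟩ := ih hse
    have heρ : G.s e = G.r ρ := hrρ.symm
    refine ⟨G.comp e ρ, ⟨?_, by rw [G.r_comp e ρ heρ, hre]⟩, by rwa [G.s_comp e ρ heρ],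
      fun ρ' hρ' hr' => ?_⟩
    · rw [G.d_comp e ρ heρ, show G.d e = (0, 1) from he, hρ, Prod.mk_add_mk, add_comm 1 k]
    obtain ⟨⟨e', t⟩, ⟨he', ht, he't, hc⟩, -⟩ := G.factor ρ' (0, 1) (0, k)
      (by rw [hρ', Prod.mk_add_mk, add_comm 1 k])
    obtain rfl : e' = e := he_uniq e' he' (by rw [← hr', ← hc, G.r_comp e' t he't])
    rw [← hc, hρ_uniq t ht he't.symm]

theorem onPath_s_of_isRed (hl : G.IsIsolatedRedCycle lam) {ρ : G.Path} (hρ : G.IsRed ρ)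
    (hr : G.OnPath lam (G.r ρ)) : G.OnPath lam (G.s ρ) := by
  obtain ⟨ρ₀, -, hs, huniq⟩ := hl.exists_unique_redPath (G.d ρ).2 hr
  rwa [huniq ρ hρ.d_eq rfl]

theorem onPath_r_of_isRed (hl : G.IsIsolatedRedCycle lam) {ρ : G.Path} (hρ : G.IsRed ρ)
    (hs : G.OnPath lam (G.s ρ)) : G.OnPath lam (G.r ρ) :=
  onPath_op_iff.1 (hl.op.onPath_s_of_isRed (G := G.op) hρ (onPath_op_iff.2 hs))

theorem eq_of_isRed_of_r_eq (hl : G.IsIsolatedRedCycle lam) {ρ₁ ρ₂ : G.Path} (hρ₁ : G.IsRed ρ₁)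
    (hd : G.d ρ₁ = G.d ρ₂) (hr : G.r ρ₁ = G.r ρ₂) (hon : G.OnPath lam (G.r ρ₁)) : ρ₁ = ρ₂ := by
  obtain ⟨ρ₀, -, -, huniq⟩ := hl.exists_unique_redPath (G.d ρ₁).2 hon
  rw [huniq ρ₁ hρ₁.d_eq rfl, huniq ρ₂ (hd ▸ hρ₁.d_eq) hr.symm]

end IsIsolatedRedCycle

theorem exists_bijective_isSwap_left {lam1 lam2 μ : G.Path} (h1 : G.IsIsolatedRedCycle lam1)
    (h2 : G.IsIsolatedRedCycle lam2) (hμ : G.IsRed μ) (hr : G.OnPath lam1 (G.r μ)) :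
    ∃ F : {σ : G.Path // G.IsBlue σ ∧ G.r σ = G.s μ ∧ G.OnPath lam2 (G.s σ)} →
        {σ' : G.Path // G.IsBlue σ' ∧ G.r σ' = G.r μ ∧ G.OnPath lam2 (G.s σ')},
      Function.Bijective F ∧ ∀ σ, ∃ ρ', G.IsSwap μ (Subtype.val σ) (F σ) ρ' := by
  refine Relator.exists_bijective_of_biTotal_of_biUnique
    (R := fun σ σ' => ∃ ρ', G.IsSwap μ (Subtype.val σ) (Subtype.val σ') ρ')
    ⟨fun ⟨σ, hb, hrσ, hon⟩ => ?_, fun ⟨σ', hb', hr', hon'⟩ => ?_⟩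
    ⟨fun σ₁ σ₂ σ' ⟨ρ₁, h₁⟩ ⟨ρ₂, h₂⟩ => ?_, fun σ σ₁' σ₂' ⟨ρ₁, h₁⟩ ⟨ρ₂, h₂⟩ => ?_⟩
  · obtain ⟨σ', ρ', h⟩ := exists_isSwap hrσ.symm
    have hρ' : G.IsRed ρ' := (congrArg Prod.fst h.2.2.2.1).trans hμ
    refine ⟨⟨σ', (congrArg Prod.snd h.2.2.1).trans hb, h.r_eq, ?_⟩, ρ', h⟩
    rw [h.2.1]
    exact h2.onPath_r_of_isRed hρ' (h.s_eq ▸ hon)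
  · -- refactor `σ' ρ'`, where `ρ'` is the red path of degree `d μ` ending at `s σ'`
    obtain ⟨ρ', ⟨hρ'd, hρ'r⟩, hρ's, -⟩ := h2.exists_unique_redPath (G.d μ).2 hon'
    obtain ⟨μ₀, σ, h⟩ := exists_isSwap hρ'r.symm
    have hμ₀ : G.IsRed μ₀ := congrArg Prod.fst (h.2.2.1.trans hρ'd)
    obtain rfl : μ₀ = μ := h1.eq_of_isRed_of_r_eq hμ₀ (h.2.2.1.trans (hρ'd.trans hμ.d_eq.symm))
      (h.r_eq.trans hr') (by rwa [h.r_eq, hr'])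
    exact ⟨⟨σ, (congrArg Prod.snd h.2.2.2.1).trans hb', h.2.1.symm, h.s_eq ▸ hρ's⟩, ρ', h.symm⟩
  · have hρ₁ : G.IsRed ρ₁ := (congrArg Prod.fst h₁.2.2.2.1).trans hμ
    have hρ : ρ₁ = ρ₂ := h2.eq_of_isRed_of_r_eq hρ₁ (h₁.2.2.2.1.trans h₂.2.2.2.1.symm)
      (h₁.2.1.symm.trans h₂.2.1) (h₁.2.1 ▸ σ'.2.2.2)
    exact Subtype.ext (factor_unique h₁.1 h₂.1 rfl
      (h₁.2.2.2.2.symm.trans (hρ ▸ h₂.2.2.2.2))).2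
  · exact Subtype.ext (h₁.unique h₂).1

theorem exists_bijective_isSwap_right {lam1 lam2 ν : G.Path} (h1 : G.IsIsolatedRedCycle lam1)
    (h2 : G.IsIsolatedRedCycle lam2) (hν : G.IsRed ν) (hr : G.OnPath lam2 (G.r ν)) :
    ∃ F : {σ : G.Path // G.IsBlue σ ∧ G.OnPath lam1 (G.r σ) ∧ G.s σ = G.r ν} →
        {σ' : G.Path // G.IsBlue σ' ∧ G.OnPath lam1 (G.r σ') ∧ G.s σ' = G.s ν},
      Function.Bijective F ∧ ∀ σ, ∃ τ', G.IsSwap (Subtype.val σ) ν τ' (F σ) := by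
  obtain ⟨F, hF, hswap⟩ := exists_bijective_isSwap_left (G := G.op) h2.op h1.op hν
    (onPath_op_iff.2 (h2.onPath_s_of_isRed hν hr))
  let e₁ : {σ : G.Path // G.IsBlue σ ∧ G.OnPath lam1 (G.r σ) ∧ G.s σ = G.r ν} ≃
      {σ : G.op.Path // G.op.IsBlue σ ∧ G.op.r σ = G.op.s ν ∧ G.op.OnPath lam1 (G.op.s σ)} :=
    Equiv.subtypeEquivRight fun _ =>
      ⟨fun ⟨hb, hr, hs⟩ => ⟨hb, hs, onPath_op_iff.2 hr⟩,
        fun ⟨hb, hs, hr⟩ => ⟨hb, onPath_op_iff.1 hr, hs⟩⟩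
  let e₂ : {σ : G.Path // G.IsBlue σ ∧ G.OnPath lam1 (G.r σ) ∧ G.s σ = G.s ν} ≃
      {σ : G.op.Path // G.op.IsBlue σ ∧ G.op.r σ = G.op.r ν ∧ G.op.OnPath lam1 (G.op.s σ)} :=
    Equiv.subtypeEquivRight fun _ =>
      ⟨fun ⟨hb, hr, hs⟩ => ⟨hb, hs, onPath_op_iff.2 hr⟩,
        fun ⟨hb, hs, hr⟩ => ⟨hb, onPath_op_iff.1 hr, hs⟩⟩
  refine ⟨e₂.symm ∘ F ∘ e₁, e₂.symm.bijective.comp (hF.comp e₁.bijective), fun σ => ?_⟩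
  obtain ⟨τ', h⟩ := hswap (e₁ σ)
  exact ⟨τ', isSwap_op_iff.1 h⟩

end TwoGraph

theorem stmt1_general (G : TwoGraph)
    (lam1 lam2 : G.Path)
    (h1 : G.IsIsolatedRedCycle lam1) (h2 : G.IsIsolatedRedCycle lam2) :
    (∀ μ, G.IsRed μ → G.OnPath lam1 (G.r μ) →
      ∃ F1 : {σ : G.Path // G.IsBlue σ ∧ G.r σ = G.s μ ∧ G.OnPath lam2 (G.s σ)} →
             {σ' : G.Path // G.IsBlue σ' ∧ G.r σ' = G.r μ ∧ G.OnPath lam2 (G.s σ')},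
        Function.Bijective F1 ∧
        ∀ σ, G.d ((F1 σ : {σ' : G.Path // G.IsBlue σ' ∧ G.r σ' = G.r μ ∧
              G.OnPath lam2 (G.s σ')}) : G.Path) = G.d (σ : G.Path) ∧
          ∃ ρ', G.IsSwap μ (σ : G.Path) ((F1 σ) : G.Path) ρ') ∧
    (∀ ν, G.IsRed ν → G.OnPath lam2 (G.r ν) →
      ∃ F2 : {σ : G.Path // G.IsBlue σ ∧ G.OnPath lam1 (G.r σ) ∧ G.s σ = G.r ν} →
             {σ' : G.Path // G.IsBlue σ' ∧ G.OnPath lam1 (G.r σ') ∧ G.s σ' = G.s ν},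
        Function.Bijective F2 ∧
        ∀ σ, G.d ((F2 σ) : G.Path) = G.d (σ : G.Path) ∧
          ∃ τ', G.IsSwap (σ : G.Path) ν τ' ((F2 σ) : G.Path)) := by
  refine ⟨fun μ hμ hr => ?_, fun ν hν hr => ?_⟩
  · obtain ⟨F, hF, hswap⟩ := TwoGraph.exists_bijective_isSwap_left h1 h2 hμ hr
    exact ⟨F, hF, fun σ => let ⟨ρ', h⟩ := hswap σ; ⟨h.2.2.1, ρ', h⟩⟩
  · obtain ⟨F, hF, hswap⟩ := TwoGraph.exists_bijective_isSwap_right h1 h2 hν hr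
    exact ⟨F, hF, fun σ => let ⟨τ', h⟩ := hswap σ; ⟨h.2.2.2.1, τ', h⟩⟩

/-- Factorisation against an isolated red cycle gives degree-preserving
bijections between sets of blue paths. -/
theorem stmt1 (G : TwoGraph) (h31 : G.Cond31)
    (lam1 lam2 : G.Path)
    (h1 : G.IsIsolatedRedCycle lam1) (h2 : G.IsIsolatedRedCycle lam2) :
    (∀ μ, G.IsRed μ → G.OnPath lam1 (G.r μ) →
      ∃ F1 : {σ : G.Path // G.IsBlue σ ∧ G.r σ = G.s μ ∧ G.OnPath lam2 (G.s σ)} →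
             {σ' : G.Path // G.IsBlue σ' ∧ G.r σ' = G.r μ ∧ G.OnPath lam2 (G.s σ')},
        Function.Bijective F1 ∧
        ∀ σ, G.d ((F1 σ : {σ' : G.Path // G.IsBlue σ' ∧ G.r σ' = G.r μ ∧
              G.OnPath lam2 (G.s σ')}) : G.Path) = G.d (σ : G.Path) ∧
          ∃ ρ', G.IsSwap μ (σ : G.Path) ((F1 σ) : G.Path) ρ') ∧
    (∀ ν, G.IsRed ν → G.OnPath lam2 (G.r ν) →
      ∃ F2 : {σ : G.Path // G.IsBlue σ ∧ G.OnPath lam1 (G.r σ) ∧ G.s σ = G.r ν} →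
             {σ' : G.Path // G.IsBlue σ' ∧ G.OnPath lam1 (G.r σ') ∧ G.s σ' = G.s ν},
        Function.Bijective F2 ∧
        ∀ σ, G.d ((F2 σ) : G.Path) = G.d (σ : G.Path) ∧
          ∃ τ', G.IsSwap (σ : G.Path) ν τ' ((F2 σ) : G.Path)) :=
  stmt1_general G lam1 lam2 h1 h2
end

section
/- Let (Λ,d) be a finite 2-graph satisfying condition (3.1), and let {s_λ : λ ∈ Λ} be a Cuntz–Krieger Λ-family in a C*-algebra A. Let S be the set of sources of the blue graph and let Y := (blue Λ)S be the set of blue paths with source in S. Then the C*-subalgebra of A generated by {s_λ : λ ∈ Λ} equals the closed linear span of {s_α s_ν s_β*, s_α s_ν* s_β* : α, β ∈ Y, ν a red path with r(ν), s(ν) ∈ S}. -/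
open scoped ENNReal

namespace Stmt3Aux

open TwoGraph

variable {G : TwoGraph}

lemma prodext {a : ℕ × ℕ} {x y : ℕ} (h1 : a.1 = x) (h2 : a.2 = y) : a = (x, y) :=
  Prod.ext_iff.mpr ⟨h1, h2⟩

lemma isVertex_s (p : G.Path) : G.IsVertex (G.s p) := G.d_s p
lemma isVertex_r (p : G.Path) : G.IsVertex (G.r p) := G.d_r p

lemma factor' (lam : G.Path) (m n : ℕ × ℕ) (h : G.d lam = m + n) :
    ∃ μ ν : G.Path, G.d μ = m ∧ G.d ν = n ∧ G.s μ = G.r ν ∧ G.comp μ ν = lam := by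
  obtain ⟨⟨μ, ν⟩, ⟨h1, h2, h3, h4⟩, -⟩ := G.factor lam m n h
  exact ⟨μ, ν, h1, h2, h3, h4⟩

lemma factor_unique {lam μ ν μ' ν' : G.Path}
    (h3 : G.s μ = G.r ν) (h4 : G.comp μ ν = lam)
    (h3' : G.s μ' = G.r ν') (h4' : G.comp μ' ν' = lam)
    (hd : G.d μ = G.d μ') : μ = μ' ∧ ν = ν' := by
  have hdl : G.d lam = G.d μ + G.d ν := by rw [← h4, G.d_comp μ ν h3]
  have hdl' : G.d lam = G.d μ' + G.d ν' := by rw [← h4', G.d_comp μ' ν' h3']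
  have hdν : G.d ν' = G.d ν := by
    have h5 := hdl.symm.trans hdl'
    rw [hd] at h5
    exact (add_left_cancel h5).symm
  obtain ⟨mn, -, huniq⟩ := G.factor lam (G.d μ) (G.d ν) hdl
  have e1 := huniq (μ, ν) ⟨rfl, rfl, h3, h4⟩
  have e2 := huniq (μ', ν') ⟨hd.symm, hdν, h3', h4'⟩
  have e3 := e1.trans e2.symm
  exact ⟨congrArg Prod.fst e3, congrArg Prod.snd e3⟩

lemma eq_of_d_zero_r {μ v : G.Path} (h : G.d μ = 0) (hr : G.r μ = v) : μ = v := by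
  rw [← hr, G.r_vertex μ h]

lemma eq_of_d_zero_s {μ v : G.Path} (h : G.d μ = 0) (hs : G.s μ = v) : μ = v := by
  rw [← hs, G.s_vertex μ h]

/-- Data of the isolated red cycle at a vertex. -/
lemma cycle_at (h31 : G.Cond31) {v : G.Path} (hv : G.IsVertex v) :
    ∃ lam L, G.d lam = (0, L) ∧ 1 ≤ L ∧ G.r lam = v ∧ G.s lam = v ∧
      G.HasNoEntrance lam ∧ G.HasNoExit lam := by
  obtain ⟨lam, ⟨hred, hcyc, hent, hexit⟩, hr⟩ := h31.2.2 v hv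
  refine ⟨lam, (G.d lam).2, prodext hred rfl, ?_, hr, hcyc.2.1.symm.trans hr, hent, hexit⟩
  rcases Nat.eq_zero_or_pos (G.d lam).2 with h | h
  · exact absurd (prodext hred h) hcyc.1
  · exact h

lemma red_edge_into (h31 : G.Cond31) {v : G.Path} (hv : G.IsVertex v) :
    ∃ f, G.IsRedEdge f ∧ G.r f = v := by
  obtain ⟨lam, L, hdlam, hL, hrlam, -, -, -⟩ := cycle_at h31 hv
  obtain ⟨f, ξ, hdf, -, hsr, hcomp⟩ := factor' lam (0, 1) (0, L - 1)
    (by rw [hdlam]; exact prodext rfl (by simp; omega))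
  exact ⟨f, hdf, by rw [← G.r_comp f ξ hsr, hcomp, hrlam]⟩

/-- Lemma A': the range of a red edge with source a blue source is a blue source. -/
lemma blueSource_r_of_redEdge (h31 : G.Cond31) {f : G.Path} (hf : G.IsRedEdge f)
    (hw : G.IsBlueSource (G.s f)) : G.IsBlueSource (G.r f) := by
  obtain ⟨lam, L, hdlam, hL, hrlam, hslam, hent, -⟩ := cycle_at h31 (isVertex_r f)
  obtain ⟨ξ, hsr, hcomp⟩ := hent (0, 1)
    (by rw [hdlam]; exact Prod.le_def.mpr ⟨Nat.zero_le _, hL⟩) f hf hrlam.symm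
  have hrξ : G.r ξ = G.s f := hsr.symm
  have hsξ : G.s ξ = G.r f := by
    rw [← G.s_comp f ξ hsr, hcomp, hslam]
  have hdξ : G.d ξ = (0, L - 1) := by
    have h5 : G.d lam = G.d f + G.d ξ := by rw [← hcomp, G.d_comp f ξ hsr]
    rw [hdlam, hf] at h5
    refine prodext ?_ ?_
    · have := congrArg Prod.fst h5; simp at this; omega
    · have := congrArg Prod.snd h5; simp at this; omega
  refine ⟨isVertex_r f, fun e he hre => ?_⟩
  have hcomp_ok : G.s ξ = G.r e := by rw [hsξ, hre]
  obtain ⟨e', ξ', hde', -, hsre', hcompe'⟩ := factor' (G.comp ξ e) (1, 0) (0, L - 1) (by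
    rw [G.d_comp ξ e hcomp_ok, hdξ, he]
    exact prodext (by simp) (by simp))
  have hre' : G.r e' = G.s f := by
    rw [← G.r_comp e' ξ' hsre', hcompe', G.r_comp ξ e hcomp_ok, hrξ]
  exact (hw.2 e' hde') hre'

end Stmt3Aux
namespace Stmt3Aux

variable {G : TwoGraph}

/-- Lemma A: the range of a red path with source a blue source is a blue source. -/
lemma blueSource_r_of_red (h31 : G.Cond31) {ν : G.Path} (hν : G.IsRed ν)
    (hw : G.IsBlueSource (G.s ν)) : G.IsBlueSource (G.r ν) := by
  suffices H : ∀ n (ν : G.Path), G.d ν = (0, n) → G.IsBlueSource (G.s ν) →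
      G.IsBlueSource (G.r ν) by
    exact H (G.d ν).2 ν (prodext hν rfl) hw
  intro n
  induction n with
  | zero =>
    intro ν hd hw
    have h0 : G.d ν = 0 := hd
    rw [G.r_vertex ν h0, ← G.s_vertex ν h0]
    exact hw
  | succ k ih =>
    intro ν hd hw
    obtain ⟨ν₁, f, hd1, hdf, hsr, hcomp⟩ := factor' ν (0, k) (0, 1)
      (by rw [hd]; exact prodext (by simp) (by simp))
    have hsf : G.s f = G.s ν := by rw [← hcomp, G.s_comp ν₁ f hsr]
    have h1 : G.IsBlueSource (G.r f) := blueSource_r_of_redEdge h31 hdf (by rw [hsf]; exact hw)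
    have h2 : G.IsBlueSource (G.s ν₁) := by rw [hsr]; exact h1
    have h3 := ih ν₁ hd1 h2
    rw [← hcomp, G.r_comp ν₁ f hsr]
    exact h3

/-- No nontrivial blue path into a blue source. -/
lemma no_blue_into_source {v : G.Path} (hv : G.IsBlueSource v) {μ : G.Path}
    (hb : G.IsBlue μ) (hd : G.d μ ≠ 0) (hr : G.r μ = v) : False := by
  have h1 : 1 ≤ (G.d μ).1 := by
    rcases Nat.eq_zero_or_pos (G.d μ).1 with h | h
    · exact absurd (prodext h hb) (by rwa [show ((0, 0) : ℕ × ℕ) = 0 from rfl])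
    · exact h
  obtain ⟨e, ρ, hde, -, hsr, hcomp⟩ := factor' μ (1, 0) ((G.d μ).1 - 1, 0)
    (by exact prodext (by simp; omega) (by simp; exact hb))
  exact hv.2 e hde (by rw [← G.r_comp e ρ hsr, hcomp, hr])

/-- No blue "returns": the blue graph has no r=s nontrivial paths. -/
lemma no_blue_return (h31 : G.Cond31) (σ : G.Path) (hb : G.IsBlue σ) (hd : G.d σ ≠ 0)
    (hrs : G.r σ = G.s σ) : False := by
  suffices H : ∀ n (σ : G.Path), (G.d σ).1 = n → G.IsBlue σ → G.d σ ≠ 0 →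
      G.r σ = G.s σ → False by exact H (G.d σ).1 σ rfl hb hd hrs
  intro n
  induction n using Nat.strong_induction_on with
  | _ n ih =>
    intro σ hn hb hd hrs
    have hnc := h31.2.1 σ hb
    rw [TwoGraph.IsCycle] at hnc
    push_neg at hnc
    obtain ⟨μ, hseg, hdμ, hdne, hsμ⟩ := hnc hd hrs
    obtain ⟨ρ, hsr, hcomp⟩ := hseg
    have hdsum : G.d σ = G.d μ + G.d ρ := by rw [← hcomp, G.d_comp μ ρ hsr]
    have hbμ : G.IsBlue μ := by
      have := congrArg Prod.snd hdsum
      simp only [Prod.snd_add] at this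
      have hb2 : (G.d σ).2 = 0 := hb
      unfold TwoGraph.IsBlue
      omega
    have hlt : (G.d μ).1 < n := by
      have := congrArg Prod.fst hdsum
      simp only [Prod.fst_add] at this
      have : (G.d μ).1 ≤ n := by omega
      rcases this.lt_or_eq with h | h
      · exact h
      · exfalso
        apply hdne
        have h2 : (G.d μ).2 = (G.d σ).2 := by
          have hbs : (G.d σ).2 = 0 := hb
          have hbm : (G.d μ).2 = 0 := hbμ
          rw [hbs, hbm]
        exact Prod.ext_iff.mpr ⟨by rw [h, hn], h2⟩
    have hrμ : G.r μ = G.s μ := by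
      rw [hsμ, ← hrs, ← hcomp, G.r_comp μ ρ hsr]
    exact ih (G.d μ).1 hlt μ rfl hbμ hdμ hrμ

/-- Bound on blue path lengths. -/
lemma blue_bound (hfin : G.FinitePaths) (h31 : G.Cond31) :
    ∃ N, ∀ p, G.IsBlue p → (G.d p).1 < N := by
  classical
  have Vfin : {p : G.Path | G.d p = 0}.Finite := hfin 0
  refine ⟨Vfin.toFinset.card + 1, ?_⟩
  by_contra hcon
  push_neg at hcon
  obtain ⟨p, hp, hlen⟩ := hcon
  set c := Vfin.toFinset.card with hc
  set m := (G.d p).1 with hm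
  have hseg : ∀ j : ℕ, j ≤ m → ∃ μ ν : G.Path, G.d μ = (j, 0) ∧ G.d ν = (m - j, 0) ∧
      G.s μ = G.r ν ∧ G.comp μ ν = p := by
    intro j hj
    exact factor' p (j, 0) (m - j, 0) (by exact prodext (by simp; omega) (by simp; exact hp))
  choose μf νf hd1 hd2 hsr hcomp using hseg
  have hcm : c + 1 ≤ m := hlen
  have maps : ∀ j ∈ Finset.range (c + 1), (if h : j ≤ m then G.s (μf j h) else p) ∈ Vfin.toFinset := by
    intro j hj
    have hjm : j ≤ m := by
      have := Finset.mem_range.mp hj; omega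
    rw [dif_pos hjm]
    simp only [Set.Finite.mem_toFinset, Set.mem_setOf_eq]
    exact G.d_s _
  obtain ⟨j, hj, k, hk, hne, heq⟩ := Finset.exists_ne_map_eq_of_card_lt_of_maps_to
    (by rw [Finset.card_range]; omega) maps
  -- wlog j < k
  have key : ∀ j k : ℕ, ∀ (hj : j ≤ m) (hk : k ≤ m), j < k →
      G.s (μf j hj) = G.s (μf k hk) → False := by
    intro j k hj hk hjk hseq
    -- factor μf k at (j,0)
    obtain ⟨a, b, hda, hdb, hab, habc⟩ := factor' (μf k hk) (j, 0) (k - j, 0)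
      (by rw [hd1 k hk]; exact prodext (by simp; omega) (by simp))
    -- a is the degree-(j,0) initial segment of p
    have hsbν : G.s b = G.r (νf k hk) := by
      rw [← G.s_comp a b hab, habc]; exact hsr k hk
    have hcomp2 : G.comp a (G.comp b (νf k hk)) = p := by
      rw [← G.comp_assoc a b (νf k hk) hab hsbν, habc]; exact hcomp k hk
    have hsab : G.s a = G.r (G.comp b (νf k hk)) := by
      rw [G.r_comp b (νf k hk) hsbν]; exact hab
    have haeq : a = μf j hj := (factor_unique hsab hcomp2 (hsr j hj) (hcomp j hj)
      (by rw [hda, hd1 j hj])).1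
    -- b is a blue return
    have hrb : G.r b = G.s b := by
      have h1 : G.r b = G.s a := hab.symm
      have h2 : G.s b = G.s (μf k hk) := by rw [← habc, G.s_comp a b hab]
      rw [h1, haeq, hseq, ← h2]
    exact no_blue_return h31 b (by exact congrArg Prod.snd hdb) (by
      rw [hdb]
      intro hzero
      have := congrArg Prod.fst hzero
      simp at this
      omega) hrb
  have hjm : j ≤ m := by have := Finset.mem_range.mp hj; omega
  have hkm : k ≤ m := by have := Finset.mem_range.mp hk; omega
  rw [dif_pos hjm, dif_pos hkm] at heq
  rcases lt_trichotomy j k with h | h | h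
  · exact key j k hjm hkm h heq
  · exact hne h
  · exact key k j hkm hjm h heq.symm

end Stmt3Aux
namespace Stmt3Aux

variable {G : TwoGraph}

lemma mem_LeSet_of_deg_eq {lam : G.Path} {n : ℕ × ℕ} (h : G.d lam = n) :
    lam ∈ G.LeSet n := by
  refine ⟨le_of_eq h, fun μ hsr hne hle => ?_⟩
  rw [G.d_comp lam μ hsr, h] at hle
  by_cases h0 : G.d μ = 0
  · exact hne (by rw [eq_of_d_zero_r h0 hsr.symm, G.comp_id])
  · apply h0
    obtain ⟨h1, h2⟩ := Prod.le_def.mp hle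
    simp only [Prod.fst_add, Prod.snd_add] at h1 h2
    exact prodext (by omega) (by omega)

/-- For `N` beyond all blue lengths, `v Λ^{≤ (N,0)} = vY`. -/
lemma mem_LeSet_blue_iff (h31 : G.Cond31) {N : ℕ} (hN : ∀ p, G.IsBlue p → (G.d p).1 < N)
    (lam : G.Path) : lam ∈ G.LeSet (N, 0) ↔ G.InY lam := by
  constructor
  · rintro ⟨hd, hmax⟩
    have hb : G.IsBlue lam := by
      have := (Prod.le_def.mp hd).2; exact Nat.le_zero.mp this
    refine ⟨hb, ?_⟩
    by_contra hns
    rw [TwoGraph.IsBlueSource] at hns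
    push_neg at hns
    obtain ⟨e, he, hre⟩ := hns (isVertex_s lam)
    refine hmax e hre.symm ?_ ?_
    · intro hceq
      have h2 := congrArg G.d hceq
      rw [G.d_comp lam e hre.symm, he] at h2
      have := congrArg Prod.fst h2
      simp at this
    · rw [G.d_comp lam e hre.symm, he]
      refine Prod.le_def.mpr ⟨?_, ?_⟩
      · simp only [Prod.fst_add]
        have := hN lam hb
        simp [he]
        omega
      · simp only [Prod.snd_add]
        have hb2 : (G.d lam).2 = 0 := hb
        simp [hb2]
  · rintro ⟨hb, hbs⟩
    refine ⟨Prod.le_def.mpr ⟨(hN lam hb).le, Nat.le_zero.mpr hb⟩, fun μ hsr hne hle => ?_⟩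
    rw [G.d_comp lam μ hsr] at hle
    obtain ⟨h1, h2⟩ := Prod.le_def.mp hle
    simp only [Prod.fst_add, Prod.snd_add] at h1 h2
    have hbμ : G.IsBlue μ := by unfold TwoGraph.IsBlue; omega
    have hdμ : G.d μ ≠ 0 := by
      intro h0
      exact hne (by rw [eq_of_d_zero_r h0 hsr.symm, G.comp_id])
    exact no_blue_into_source hbs hbμ hdμ hsr.symm

/-- Uniqueness of red paths into a given vertex (Lemma E). -/
lemma red_unique (h31 : G.Cond31) {μ μ' : G.Path} (hd : G.d μ = (0, (G.d μ).2))
    (hd' : G.d μ' = G.d μ) (hr : G.r μ = G.r μ') : μ = μ' := by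
  suffices H : ∀ n (μ μ' : G.Path), G.d μ = (0, n) → G.d μ' = (0, n) →
      G.r μ = G.r μ' → μ = μ' by
    exact H (G.d μ).2 μ μ' hd (hd'.trans hd) hr
  intro n
  induction n using Nat.strong_induction_on with
  | _ n ih =>
    intro μ μ' hd hd' hr
    obtain ⟨lam, L, hdlam, hL, hrlam, hslam, hent, -⟩ := cycle_at h31 (isVertex_r μ)
    by_cases hcase : n ≤ L
    · -- both initial segments of lam
      have key : ∀ ρ : G.Path, G.d ρ = (0, n) → G.r ρ = G.r μ →
          ∃ ξ, G.s ρ = G.r ξ ∧ G.comp ρ ξ = lam :=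
        fun ρ hdρ hrρ => hent (0, n)
          (by rw [hdlam]; exact Prod.le_def.mpr ⟨le_refl 0, hcase⟩) ρ hdρ
          (by rw [hrρ, hrlam])
      obtain ⟨ξ, hx1, hx2⟩ := key μ hd rfl
      obtain ⟨ξ', hx1', hx2'⟩ := key μ' hd' hr.symm
      exact (factor_unique hx1 hx2 hx1' hx2' (hd.trans hd'.symm)).1
    · -- split off lam
      have split : ∀ ρ : G.Path, G.d ρ = (0, n) → G.r ρ = G.r μ →
          ∃ ρ₂, G.d ρ₂ = (0, n - L) ∧ G.r ρ₂ = G.r μ ∧ G.s lam = G.r ρ₂ ∧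
            G.comp lam ρ₂ = ρ := by
        intro ρ hdρ hrρ
        obtain ⟨ρ₁, ρ₂, h1, h2, h3, h4⟩ := factor' ρ (0, L) (0, n - L)
          (by rw [hdρ]; exact prodext (by simp) (by simp; omega))
        have hrρ₁ : G.r ρ₁ = G.r lam := by
          rw [← G.r_comp ρ₁ ρ₂ h3, h4, hrρ, hrlam]
        obtain ⟨ξ, hξ1, hξ2⟩ := hent (0, L) (le_of_eq hdlam.symm) ρ₁ h1 hrρ₁
        have hdξ : G.d ξ = 0 := by
          have h5 : G.d lam = G.d ρ₁ + G.d ξ := by rw [← hξ2, G.d_comp ρ₁ ξ hξ1]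
          rw [hdlam, h1] at h5
          obtain ⟨e1, e2⟩ := Prod.ext_iff.mp h5
          simp only [Prod.fst_add, Prod.snd_add] at e1 e2
          exact (prodext (by omega) (by omega) : G.d ξ = (0,0))
        have hρ₁lam : ρ₁ = lam := by
          rw [← hξ2, eq_of_d_zero_r hdξ hξ1.symm, G.comp_id]
        refine ⟨ρ₂, h2, ?_, by rw [← hρ₁lam]; exact h3, by rw [← hρ₁lam]; exact h4⟩
        rw [← h3, hρ₁lam]
        exact hslam
      obtain ⟨μ₂, ha1, ha2, ha3, ha4⟩ := split μ hd rfl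
      obtain ⟨μ₂', hb1, hb2, hb3, hb4⟩ := split μ' hd' hr.symm
      have hrr : G.r μ₂ = G.r μ₂' := by rw [← ha3, ← hb3]
      have : μ₂ = μ₂' := ih (n - L) (by omega) μ₂ μ₂' ha1 hb1 hrr
      rw [← ha4, ← hb4, this]

/-- Uniqueness of red paths out of a given vertex (Lemma E'). -/
lemma red_unique_src (h31 : G.Cond31) {μ μ' : G.Path} (hd : G.d μ = (0, (G.d μ).2))
    (hd' : G.d μ' = G.d μ) (hs : G.s μ = G.s μ') : μ = μ' := by
  suffices H : ∀ n (μ μ' : G.Path), G.d μ = (0, n) → G.d μ' = (0, n) →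
      G.s μ = G.s μ' → μ = μ' by
    exact H (G.d μ).2 μ μ' hd (hd'.trans hd) hs
  intro n
  induction n using Nat.strong_induction_on with
  | _ n ih =>
    intro μ μ' hd hd' hs
    obtain ⟨lam, L, hdlam, hL, hrlam, hslam, -, hexit⟩ := cycle_at h31 (isVertex_s μ)
    by_cases hcase : n ≤ L
    · have key : ∀ ρ : G.Path, G.d ρ = (0, n) → G.s ρ = G.s μ →
          ∃ ξ, G.s ξ = G.r ρ ∧ G.comp ξ ρ = lam :=
        fun ρ hdρ hsρ => hexit (0, n)
          (by rw [hdlam]; exact Prod.le_def.mpr ⟨le_refl 0, hcase⟩) ρ hdρ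
          (by rw [hsρ, hslam])
      obtain ⟨ξ, hx1, hx2⟩ := key μ hd rfl
      obtain ⟨ξ', hx1', hx2'⟩ := key μ' hd' hs.symm
      have hdξ : G.d ξ = G.d ξ' := by
        have e1 : G.d lam = G.d ξ + G.d μ := by rw [← hx2, G.d_comp ξ μ hx1]
        have e2 : G.d lam = G.d ξ' + G.d μ' := by rw [← hx2', G.d_comp ξ' μ' hx1']
        have e3 := e1.symm.trans e2
        rw [hd'.trans hd.symm] at e3
        exact add_right_cancel e3
      exact (factor_unique hx1 hx2 hx1' hx2' hdξ).2
    · have split : ∀ ρ : G.Path, G.d ρ = (0, n) → G.s ρ = G.s μ →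
          ∃ ρ₁, G.d ρ₁ = (0, n - L) ∧ G.s ρ₁ = G.s μ ∧ G.s ρ₁ = G.r lam ∧
            G.comp ρ₁ lam = ρ := by
        intro ρ hdρ hsρ
        obtain ⟨ρ₁, ρ₂, h1, h2, h3, h4⟩ := factor' ρ (0, n - L) (0, L)
          (by rw [hdρ]; exact prodext (by simp) (by simp; omega))
        have hsρ₂ : G.s ρ₂ = G.s lam := by
          rw [← G.s_comp ρ₁ ρ₂ h3, h4, hsρ, hslam]
        obtain ⟨ξ, hξ1, hξ2⟩ := hexit (0, L) (le_of_eq hdlam.symm) ρ₂ h2 hsρ₂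
        have hdξ : G.d ξ = 0 := by
          have h5 : G.d lam = G.d ξ + G.d ρ₂ := by rw [← hξ2, G.d_comp ξ ρ₂ hξ1]
          rw [hdlam, h2] at h5
          obtain ⟨e1, e2⟩ := Prod.ext_iff.mp h5
          simp only [Prod.fst_add, Prod.snd_add] at e1 e2
          exact (prodext (by omega) (by omega) : G.d ξ = (0,0))
        have hρ₂lam : ρ₂ = lam := by
          rw [← hξ2, eq_of_d_zero_s hdξ hξ1, G.id_comp]
        have hsρ₁ : G.s ρ₁ = G.r lam := by rw [← hρ₂lam]; exact h3
        refine ⟨ρ₁, h1, ?_, hsρ₁, by rw [← hρ₂lam]; exact h4⟩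
        rw [hsρ₁, hrlam]  -- s ρ₁ = s μ : r lam = s μ? hrlam : r lam = s μ
      obtain ⟨μ₁, ha1, ha2, ha3, ha4⟩ := split μ hd rfl
      obtain ⟨μ₁', hb1, hb2, hb3, hb4⟩ := split μ' hd' hs.symm
      have hss : G.s μ₁ = G.s μ₁' := by rw [ha2, hb2]
      have : μ₁ = μ₁' := ih (n - L) (by omega) μ₁ μ₁' ha1 hb1 hss
      rw [← ha4, ← hb4, this]

end Stmt3Aux
namespace Stmt3Aux

variable {A : Type*} [CStarAlgebra A] {G : TwoGraph} (F : CKFamily G A)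

lemma S_mul_s (p : G.Path) : F.S p * F.S (G.s p) = F.S p := by
  rw [F.ck2 p (G.s p) (by rw [G.r_vertex _ (isVertex_s p)]), G.comp_id]

lemma r_mul_S (p : G.Path) : F.S (G.r p) * F.S p = F.S p := by
  rw [F.ck2 (G.r p) p (by rw [G.s_vertex _ (isVertex_r p)]), G.id_comp]

lemma vertex_mul_S_eq {w p : G.Path} (h : G.r p = w) : F.S w * F.S p = F.S p := by
  rw [← h]; exact r_mul_S F p

lemma S_mul_vertex_eq {w p : G.Path} (h : G.s p = w) : F.S p * F.S w = F.S p := by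
  rw [← h]; exact S_mul_s F p

lemma S_mul_vertex_ne {w p : G.Path} (hw : G.IsVertex w) (h : G.s p ≠ w) :
    F.S p * F.S w = 0 := by
  rw [← S_mul_s F p, mul_assoc, F.ck1_orth (G.s p) w (isVertex_s p) hw h, mul_zero]

lemma vertex_mul_S_ne {w p : G.Path} (hw : G.IsVertex w) (h : G.r p ≠ w) :
    F.S w * F.S p = 0 := by
  rw [← r_mul_S F p, ← mul_assoc, F.ck1_orth w (G.r p) hw (isVertex_r p) (Ne.symm h),
    zero_mul]

lemma S_mul_S_of_ne {p q : G.Path} (h : G.s p ≠ G.r q) : F.S p * F.S q = 0 := by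
  rw [← r_mul_S F q, ← mul_assoc, S_mul_vertex_ne F (isVertex_r q) h, zero_mul]

lemma sSv_star (p : G.Path) : F.S (G.s p) * star (F.S p) = star (F.S p) := by
  rw [← F.ck1_sa _ (isVertex_s p), ← star_mul, S_mul_s]

lemma star_S_mul_S (p : G.Path) : star (F.S p) * F.S p = F.S (G.s p) := F.ck3 p

lemma proj_idem (p : G.Path) :
    (F.S p * star (F.S p)) * (F.S p * star (F.S p)) = F.S p * star (F.S p) := by
  rw [mul_assoc, ← mul_assoc (star (F.S p)), F.ck3, sSv_star]

lemma finite_le (hfin : G.FinitePaths) (n : ℕ × ℕ) : {p : G.Path | G.d p ≤ n}.Finite := by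
  have hsub : {p : G.Path | G.d p ≤ n} ⊆ ⋃ m ∈ Set.Iic n, {p : G.Path | G.d p = m} :=
    fun p hp => Set.mem_biUnion hp rfl
  exact Set.Finite.subset ((Set.finite_Iic n).biUnion (fun m _ => hfin m)) hsub

lemma ck4' (hfin : G.FinitePaths) (v : G.Path) (n : ℕ × ℕ) (hv : G.IsVertex v) :
    ∃ t : Finset G.Path, (∀ lam, lam ∈ t ↔ (lam ∈ G.LeSet n ∧ G.r lam = v)) ∧
      F.S v = ∑ lam ∈ t, F.S lam * star (F.S lam) := by
  have hF : {lam : G.Path | lam ∈ G.LeSet n ∧ G.r lam = v}.Finite :=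
    (finite_le hfin n).subset (fun p hp => hp.1.1)
  refine ⟨hF.toFinset, fun lam => by simp [Set.Finite.mem_toFinset], ?_⟩
  rw [F.ck4 v n hv, finsum_mem_eq_finite_toFinset_sum _ hF]

/-- Orthogonality of the range projections in a CK4 decomposition. -/
lemma ortho (hfin : G.FinitePaths) {v : G.Path} {n : ℕ × ℕ} (hv : G.IsVertex v)
    {lam lam' : G.Path} (h1 : lam ∈ G.LeSet n) (h2 : G.r lam = v)
    (h1' : lam' ∈ G.LeSet n) (h2' : G.r lam' = v) (hne : lam ≠ lam') :
    star (F.S lam) * F.S lam' = 0 := by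
  classical
  letI := CStarAlgebra.spectralOrder A
  haveI := CStarAlgebra.spectralOrderedRing A
  obtain ⟨t, ht, hsum⟩ := ck4' F hfin v n hv
  set p : G.Path → A := fun i => F.S i * star (F.S i) with hp
  have hp_sa : ∀ i, star (p i) = p i := fun i => by simp [hp, star_mul]
  have hmem : lam ∈ t := (ht lam).mpr ⟨h1, h2⟩
  have hmem' : lam' ∈ t := (ht lam').mpr ⟨h1', h2'⟩
  have hvp : ∀ i ∈ t, F.S v * p i = p i := by
    intro i hi
    rw [hp, ← mul_assoc, vertex_mul_S_eq F ((ht i).mp hi).2]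
  have hpv : ∀ i ∈ t, p i * F.S v = p i := by
    intro i hi
    have := congrArg star (hvp i hi)
    rwa [star_mul, hp_sa, F.ck1_sa v hv] at this
  have hidem : ∀ i, p i * p i = p i := fun i => proj_idem F i
  have hsum2 : ∑ j ∈ t, p lam * p j * p lam = p lam := by
    have e1 : ∑ j ∈ t, p lam * p j * p lam = p lam * (∑ j ∈ t, p j) * p lam := by
      rw [Finset.mul_sum, Finset.sum_mul]
    rw [e1, ← hsum, hpv lam hmem, hidem]
  have hterm : ∀ j ∈ t, p lam * p j * p lam = star (p j * p lam) * (p j * p lam) := by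
    intro j hj
    rw [star_mul, hp_sa, hp_sa]
    conv_rhs => rw [← mul_assoc, mul_assoc (p lam) (p j) (p j), hidem j]
  have hself : p lam * p lam * p lam = p lam := by rw [hidem, hidem]
  have herase : ∑ j ∈ t.erase lam, star (p j * p lam) * (p j * p lam) = 0 := by
    have e2 : ∑ j ∈ t.erase lam, p lam * p j * p lam + p lam * p lam * p lam
        = ∑ j ∈ t, p lam * p j * p lam := Finset.sum_erase_add t _ hmem
    rw [hsum2, hself] at e2
    have e3 : ∑ j ∈ t.erase lam, p lam * p j * p lam = 0 := by
      have := congrArg (fun x => x - p lam) e2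
      simpa using this
    rw [← e3]
    exact Finset.sum_congr rfl (fun j hj => (hterm j (Finset.mem_of_mem_erase hj)).symm)
  have hzero : p lam' * p lam = 0 := by
    have h4 := (Finset.sum_eq_zero_iff_of_nonneg
      (fun j _ => star_mul_self_nonneg (p j * p lam))).mp herase lam'
      (Finset.mem_erase.mpr ⟨Ne.symm hne, hmem'⟩)
    exact CStarRing.star_mul_self_eq_zero_iff _ |>.mp h4
  have hzero' : p lam * p lam' = 0 := by
    have := congrArg star hzero
    rwa [star_mul, hp_sa, hp_sa, star_zero] at this
  have e5 : star (F.S lam) * p lam = star (F.S lam) := by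
    show star (F.S lam) * (F.S lam * star (F.S lam)) = _
    rw [← mul_assoc, F.ck3, sSv_star]
  have e6 : p lam' * F.S lam' = F.S lam' := by
    show (F.S lam' * star (F.S lam')) * F.S lam' = _
    rw [mul_assoc, F.ck3, S_mul_s]
  calc star (F.S lam) * F.S lam'
      = (star (F.S lam) * p lam) * (p lam' * F.S lam') := by rw [e5, e6]
    _ = star (F.S lam) * (p lam * p lam') * F.S lam' := by simp only [mul_assoc]
    _ = 0 := by rw [hzero', mul_zero, zero_mul]

end Stmt3Aux
namespace Stmt3Aux

variable {A : Type*} [CStarAlgebra A] {G : TwoGraph} (F : CKFamily G A)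

/-- Range projections of red paths are full: `s_ρ s_ρ* = s_{r ρ}`. -/
lemma red_proj (hfin : G.FinitePaths) (h31 : G.Cond31) {ρ : G.Path} (hρ : G.IsRed ρ) :
    F.S ρ * star (F.S ρ) = F.S (G.r ρ) := by
  obtain ⟨t, ht, hsum⟩ := ck4' F hfin (G.r ρ) (0, (G.d ρ).2) (isVertex_r ρ)
  have hρd : G.d ρ = (0, (G.d ρ).2) := prodext hρ rfl
  have hmem : ρ ∈ t := (ht ρ).mpr ⟨mem_LeSet_of_deg_eq hρd, rfl⟩
  have huniq : ∀ lam ∈ t, lam = ρ := by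
    intro lam hl
    obtain ⟨⟨hdle, hmax⟩, hr⟩ := (ht lam).mp hl
    obtain ⟨hle1, hle2⟩ := Prod.le_def.mp hdle
    have hfull : (G.d lam).2 = (G.d ρ).2 := by
      by_contra hne2
      obtain ⟨f, hf, hrf⟩ := red_edge_into h31 (isVertex_s lam)
      refine hmax f hrf.symm ?_ ?_
      · intro hceq
        have h6 := congrArg G.d hceq
        rw [G.d_comp lam f hrf.symm, hf] at h6
        have h7 := congrArg Prod.snd h6
        simp at h7
      · rw [G.d_comp lam f hrf.symm, hf]
        refine Prod.le_def.mpr ⟨?_, ?_⟩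
        · simp only [Prod.fst_add]; omega
        · have h8 : (G.d lam).2 ≤ (G.d ρ).2 := hle2
          show (G.d lam).2 + 1 ≤ (G.d ρ).2
          omega
    have hdlam : G.d lam = (0, (G.d lam).2) := prodext (Nat.le_zero.mp hle1) rfl
    exact red_unique h31 hdlam (by rw [hρd]; exact (prodext (Nat.le_zero.mp hle1) hfull).symm ▸ rfl) hr
  have ht1 : t = {ρ} := Finset.eq_singleton_iff_unique_mem.mpr ⟨hmem, huniq⟩
  rw [ht1, Finset.sum_singleton] at hsum
  exact hsum.symm

lemma Y_orth_aux (hfin : G.FinitePaths) (h31 : G.Cond31) {β γ : G.Path}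
    (hβ : G.InY β) (hγ : G.InY γ) (hne : β ≠ γ) (hm : (G.d β).1 ≤ (G.d γ).1) :
    star (F.S β) * F.S γ = 0 := by
  by_cases hr : G.r β = G.r γ
  case neg =>
    rw [← r_mul_S F γ, ← mul_assoc]
    have h5 : star (F.S β) * F.S (G.r γ) = 0 := by
      have e : star (F.S β) * F.S (G.r γ) = star (F.S (G.r γ) * F.S β) := by
        rw [star_mul, F.ck1_sa _ (isVertex_r γ)]
      rw [e, vertex_mul_S_ne F (isVertex_r γ) hr, star_zero]
    rw [h5, zero_mul]
  case pos =>
    have hdγ : G.d γ = ((G.d β).1, 0) + ((G.d γ).1 - (G.d β).1, 0) :=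
      prodext (by simp; omega) (by simp; exact hγ.1)
    obtain ⟨γ₁, γ₂, h1, h2, h3, h4⟩ := factor' γ _ _ hdγ
    by_cases hg : γ₁ = β
    · exfalso
      by_cases h0 : G.d γ₂ = 0
      · exact hne (by rw [← h4, eq_of_d_zero_r h0 h3.symm, G.comp_id, hg])
      · refine no_blue_into_source hβ.2 ?_ h0 ?_
        · show (G.d γ₂).2 = 0
          rw [h2]
        · rw [← h3, hg]
    · have hdβ : G.d β = ((G.d β).1, 0) := prodext rfl hβ.1
      have hrγ₁ : G.r γ₁ = G.r β := by rw [← G.r_comp γ₁ γ₂ h3, h4, hr]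
      have o := ortho F hfin (isVertex_r β) (mem_LeSet_of_deg_eq hdβ) rfl
        (mem_LeSet_of_deg_eq (h1.trans hdβ.symm ▸ h1 : G.d γ₁ = ((G.d β).1, 0))) hrγ₁
        (fun h => hg h.symm)
      rw [← h4, ← F.ck2 γ₁ γ₂ h3, ← mul_assoc, o, zero_mul]

lemma Y_orth (hfin : G.FinitePaths) (h31 : G.Cond31) {β γ : G.Path}
    (hβ : G.InY β) (hγ : G.InY γ) (hne : β ≠ γ) : star (F.S β) * F.S γ = 0 := by
  rcases le_total (G.d β).1 (G.d γ).1 with h | h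
  · exact Y_orth_aux F hfin h31 hβ hγ hne h
  · have h5 := Y_orth_aux F hfin h31 hγ hβ (Ne.symm hne) h
    calc star (F.S β) * F.S γ = star (star (F.S γ) * F.S β) := by rw [star_mul, star_star]
      _ = 0 := by rw [h5, star_zero]

/-- `s_ν* s_ρ` for red paths with common range. -/
lemma mid4 (h31 : G.Cond31) {ν ρ : G.Path} (hν : G.IsRed ν) (hρ : G.IsRed ρ)
    (hr : G.r ν = G.r ρ) :
    ∃ σ, G.IsRed σ ∧
      ((star (F.S ν) * F.S ρ = F.S σ ∧ G.r σ = G.s ν ∧ G.s σ = G.s ρ) ∨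
       (star (F.S ν) * F.S ρ = star (F.S σ) ∧ G.r σ = G.s ρ ∧ G.s σ = G.s ν)) := by
  rcases le_total (G.d ν).2 (G.d ρ).2 with h | h
  · obtain ⟨ρ₁, ρ₂, h1, h2, h3, h4⟩ := factor' ρ (0, (G.d ν).2) (0, (G.d ρ).2 - (G.d ν).2)
      (prodext (by simp; exact hρ) (by simp; omega))
    have hρ₁ : ρ₁ = ν := red_unique h31 (by rw [h1]) (by rw [h1]; exact prodext hν rfl)
      (by rw [← G.r_comp ρ₁ ρ₂ h3, h4]; exact hr.symm)
    subst hρ₁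
    refine ⟨ρ₂, by rw [TwoGraph.IsRed, h2], Or.inl ⟨?_, h3.symm, by rw [← h4, G.s_comp ρ₁ ρ₂ h3]⟩⟩
    rw [← h4, ← F.ck2 ρ₁ ρ₂ h3, ← mul_assoc, F.ck3, vertex_mul_S_eq F h3.symm]
  · obtain ⟨ν₁, ν₂, h1, h2, h3, h4⟩ := factor' ν (0, (G.d ρ).2) (0, (G.d ν).2 - (G.d ρ).2)
      (prodext (by simp; exact hν) (by simp; omega))
    have hν₁ : ν₁ = ρ := red_unique h31 (by rw [h1]) (by rw [h1]; exact prodext hρ rfl)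
      (by rw [← G.r_comp ν₁ ν₂ h3, h4]; exact hr)
    subst hν₁
    refine ⟨ν₂, by rw [TwoGraph.IsRed, h2], Or.inr ⟨?_, h3.symm, by rw [← h4, G.s_comp ν₁ ν₂ h3]⟩⟩
    rw [← h4, ← F.ck2 ν₁ ν₂ h3, star_mul, mul_assoc, F.ck3]
    have e : star (F.S ν₂) * F.S (G.s ν₁) = star (F.S ν₂) := by
      rw [← F.ck1_sa _ (isVertex_s ν₁), ← star_mul, vertex_mul_S_eq F h3.symm]
    rw [e]

/-- `s_ν s_ρ*` for red paths with common source. -/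
lemma mid3 (hfin : G.FinitePaths) (h31 : G.Cond31) {ν ρ : G.Path} (hν : G.IsRed ν)
    (hρ : G.IsRed ρ) (hs : G.s ν = G.s ρ) :
    ∃ σ, G.IsRed σ ∧
      ((F.S ν * star (F.S ρ) = F.S σ ∧ G.r σ = G.r ν ∧ G.s σ = G.r ρ) ∨
       (F.S ν * star (F.S ρ) = star (F.S σ) ∧ G.r σ = G.r ρ ∧ G.s σ = G.r ν)) := by
  rcases le_total (G.d ρ).2 (G.d ν).2 with h | h
  · obtain ⟨ν₁, ν₂, h1, h2, h3, h4⟩ := factor' ν (0, (G.d ν).2 - (G.d ρ).2) (0, (G.d ρ).2)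
      (prodext (by simp; exact hν) (by simp; omega))
    have hν₂ : ν₂ = ρ := red_unique_src h31 (by rw [h2]) (by rw [h2]; exact prodext hρ rfl)
      (by rw [← G.s_comp ν₁ ν₂ h3, h4]; exact hs)
    subst hν₂
    refine ⟨ν₁, by rw [TwoGraph.IsRed, h1], Or.inl ⟨?_,
      by rw [← h4, G.r_comp ν₁ ν₂ h3], h3⟩⟩
    rw [← h4, ← F.ck2 ν₁ ν₂ h3, mul_assoc, red_proj F hfin h31 hρ, S_mul_vertex_eq F h3]
  · obtain ⟨ρ₁, ρ₂, h1, h2, h3, h4⟩ := factor' ρ (0, (G.d ρ).2 - (G.d ν).2) (0, (G.d ν).2)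
      (prodext (by simp; exact hρ) (by simp; omega))
    have hρ₂ : ρ₂ = ν := red_unique_src h31 (by rw [h2]) (by rw [h2]; exact prodext hν rfl)
      (by rw [← G.s_comp ρ₁ ρ₂ h3, h4]; exact hs.symm)
    subst hρ₂
    refine ⟨ρ₁, by rw [TwoGraph.IsRed, h1], Or.inr ⟨?_,
      by rw [← h4, G.r_comp ρ₁ ρ₂ h3], h3⟩⟩
    rw [← h4, ← F.ck2 ρ₁ ρ₂ h3, star_mul, ← mul_assoc, red_proj F hfin h31 hν]
    rw [← F.ck1_sa _ (isVertex_r ρ₂), ← star_mul, S_mul_vertex_eq F h3]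

end Stmt3Aux
namespace Stmt3Aux

variable {A : Type*} [CStarAlgebra A] {G : TwoGraph} (F : CKFamily G A)

lemma w_star_S (w : G.Path) (hw : G.IsVertex w) (ρ : G.Path) :
    F.S w * star (F.S ρ) = star (F.S ρ * F.S w) := by
  rw [star_mul, F.ck1_sa w hw]

/-- The middle products `s_ν^{±} s_w s_ρ^{±}`. -/
lemma midprod (hfin : G.FinitePaths) (h31 : G.Cond31) {ν ρ w : G.Path} (hw : G.IsVertex w)
    (hν : G.IsRed ν) (hρ : G.IsRed ρ)
    (hνr : G.IsBlueSource (G.r ν)) (hνs : G.IsBlueSource (G.s ν))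
    (hρr : G.IsBlueSource (G.r ρ)) (hρs : G.IsBlueSource (G.s ρ))
    (Mx My : A) (hMx : Mx = F.S ν ∨ Mx = star (F.S ν))
    (hMy : My = F.S ρ ∨ My = star (F.S ρ)) :
    Mx * (F.S w * My) = 0 ∨
      ∃ σ, G.IsRed σ ∧ G.IsBlueSource (G.r σ) ∧ G.IsBlueSource (G.s σ) ∧
        (Mx * (F.S w * My) = F.S σ ∨ Mx * (F.S w * My) = star (F.S σ)) := by
  rcases hMx with rfl | rfl <;> rcases hMy with rfl | rfl
  · -- S ν * (S w * S ρ)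
    by_cases hw1 : G.r ρ = w
    case neg => rw [vertex_mul_S_ne F hw hw1, mul_zero]; exact Or.inl rfl
    case pos =>
      rw [vertex_mul_S_eq F hw1]
      by_cases hc : G.s ν = G.r ρ
      case neg => rw [S_mul_S_of_ne F hc]; exact Or.inl rfl
      case pos =>
        rw [F.ck2 ν ρ hc]
        refine Or.inr ⟨G.comp ν ρ, ?_, ?_, ?_, Or.inl rfl⟩
        · show (G.d (G.comp ν ρ)).1 = 0
          rw [G.d_comp ν ρ hc, Prod.fst_add]
          have e1 : (G.d ν).1 = 0 := hν
          have e2 : (G.d ρ).1 = 0 := hρ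
          omega
        · rw [G.r_comp ν ρ hc]; exact hνr
        · rw [G.s_comp ν ρ hc]; exact hρs
  · -- S ν * (S w * star (S ρ))
    rw [w_star_S F w hw]
    by_cases hw2 : G.s ρ = w
    case neg =>
      rw [S_mul_vertex_ne F hw hw2, star_zero, mul_zero]; exact Or.inl rfl
    case pos =>
      rw [S_mul_vertex_eq F hw2]
      by_cases hc : G.s ν = G.s ρ
      case neg =>
        rw [← sSv_star F ρ, ← mul_assoc, S_mul_vertex_ne F (isVertex_s ρ) hc, zero_mul]
        exact Or.inl rfl
      case pos =>
        obtain ⟨σ, hσred, hform⟩ := mid3 F hfin h31 hν hρ hc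
        rcases hform with ⟨he, hr1, hs1⟩ | ⟨he, hr1, hs1⟩
        · exact Or.inr ⟨σ, hσred, hr1 ▸ hνr, hs1 ▸ hρr, Or.inl he⟩
        · exact Or.inr ⟨σ, hσred, hr1 ▸ hρr, hs1 ▸ hνr, Or.inr he⟩
  · -- star (S ν) * (S w * S ρ)
    by_cases hw1 : G.r ρ = w
    case neg => rw [vertex_mul_S_ne F hw hw1, mul_zero]; exact Or.inl rfl
    case pos =>
      rw [vertex_mul_S_eq F hw1]
      by_cases hc : G.r ν = G.r ρ
      case neg =>
        rw [← r_mul_S F ρ, ← mul_assoc]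
        have e : star (F.S ν) * F.S (G.r ρ) = 0 := by
          rw [← F.ck1_sa _ (isVertex_r ρ), ← star_mul, vertex_mul_S_ne F (isVertex_r ρ) hc,
            star_zero]
        rw [e, zero_mul]; exact Or.inl rfl
      case pos =>
        obtain ⟨σ, hσred, hform⟩ := mid4 F h31 hν hρ hc
        rcases hform with ⟨he, hr1, hs1⟩ | ⟨he, hr1, hs1⟩
        · exact Or.inr ⟨σ, hσred, hr1 ▸ hνs, hs1 ▸ hρs, Or.inl he⟩
        · exact Or.inr ⟨σ, hσred, hr1 ▸ hρs, hs1 ▸ hνs, Or.inr he⟩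
  · -- star (S ν) * (S w * star (S ρ))
    rw [w_star_S F w hw]
    by_cases hw2 : G.s ρ = w
    case neg =>
      rw [S_mul_vertex_ne F hw hw2, star_zero, mul_zero]; exact Or.inl rfl
    case pos =>
      rw [S_mul_vertex_eq F hw2, ← star_mul]
      by_cases hc : G.s ρ = G.r ν
      case neg => rw [S_mul_S_of_ne F hc, star_zero]; exact Or.inl rfl
      case pos =>
        rw [F.ck2 ρ ν hc]
        refine Or.inr ⟨G.comp ρ ν, ?_, ?_, ?_, Or.inr rfl⟩
        · show (G.d (G.comp ρ ν)).1 = 0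
          rw [G.d_comp ρ ν hc, Prod.fst_add]
          have e1 : (G.d ν).1 = 0 := hν
          have e2 : (G.d ρ).1 = 0 := hρ
          omega
        · rw [G.r_comp ρ ν hc]; exact hρr
        · rw [G.s_comp ρ ν hc]; exact hνs

variable (G) in
/-- The generating set. -/
def gen : Set A := {x : A | ∃ α β ν, G.InY α ∧ G.InY β ∧ G.IsRed ν ∧
  G.IsBlueSource (G.r ν) ∧ G.IsBlueSource (G.s ν) ∧
  (x = F.S α * F.S ν * star (F.S β) ∨
   x = F.S α * star (F.S ν) * star (F.S β))}

lemma gen_star {x : A} (hx : x ∈ gen G F) : star x ∈ gen G F := by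
  obtain ⟨α, β, ν, hα, hβ, hν, h1, h2, hf⟩ := hx
  rcases hf with rfl | rfl
  · exact ⟨β, α, ν, hβ, hα, hν, h1, h2, Or.inr (by simp only [star_mul, star_star, mul_assoc])⟩
  · exact ⟨β, α, ν, hβ, hα, hν, h1, h2, Or.inl (by simp only [star_mul, star_star, mul_assoc])⟩

lemma gen_mul_gen (hfin : G.FinitePaths) (h31 : G.Cond31) {x y : A}
    (hx : x ∈ gen G F) (hy : y ∈ gen G F) : x * y ∈ Submodule.span ℂ (gen G F) := by
  obtain ⟨α, β, ν, hα, hβ, hν, hνr, hνs, hxf⟩ := hx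
  obtain ⟨γ, δ, ρ, hγ, hδ, hρ, hρr, hρs, hyf⟩ := hy
  obtain ⟨Mx, hMx, hxe⟩ : ∃ Mx, (Mx = F.S ν ∨ Mx = star (F.S ν)) ∧
      x = F.S α * Mx * star (F.S β) := by
    rcases hxf with h | h
    exacts [⟨F.S ν, Or.inl rfl, h⟩, ⟨star (F.S ν), Or.inr rfl, h⟩]
  obtain ⟨My, hMy, hye⟩ : ∃ My, (My = F.S ρ ∨ My = star (F.S ρ)) ∧
      y = F.S γ * My * star (F.S δ) := by
    rcases hyf with h | h
    exacts [⟨F.S ρ, Or.inl rfl, h⟩, ⟨star (F.S ρ), Or.inr rfl, h⟩]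
  subst hxe hye
  by_cases hbg : β = γ
  case neg =>
    have hbo := Y_orth F hfin h31 hβ hγ hbg
    have hz : (F.S α * Mx * star (F.S β)) * (F.S γ * My * star (F.S δ)) = 0 := by
      simp only [mul_assoc]
      rw [← mul_assoc (star (F.S β)) (F.S γ) (My * star (F.S δ)), hbo, zero_mul, mul_zero,
        mul_zero]
    rw [hz]; exact Submodule.zero_mem _
  case pos =>
    subst hbg
    have hxy : (F.S α * Mx * star (F.S β)) * (F.S β * My * star (F.S δ)) =
        F.S α * ((Mx * (F.S (G.s β) * My)) * star (F.S δ)) := by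
      simp only [mul_assoc]
      rw [← mul_assoc (star (F.S β)) (F.S β) (My * star (F.S δ)), F.ck3 β]
    rcases midprod F hfin h31 (isVertex_s β) hν hρ hνr hνs hρr hρs Mx My hMx hMy with
      h0 | ⟨σ, hσred, hσ1, hσ2, hform⟩
    · rw [hxy, h0, zero_mul, mul_zero]; exact Submodule.zero_mem _
    · rcases hform with he | he
      · rw [hxy, he]
        exact Submodule.subset_span ⟨α, δ, σ, hα, hδ, hσred, hσ1, hσ2,
          Or.inl (by rw [mul_assoc])⟩
      · rw [hxy, he]
        exact Submodule.subset_span ⟨α, δ, σ, hα, hδ, hσred, hσ1, hσ2,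
          Or.inr (by rw [mul_assoc])⟩

/-- Every generator `s_p` lies in the span. -/
lemma S_mem_span (hfin : G.FinitePaths) (h31 : G.Cond31) (p : G.Path) :
    F.S p ∈ Submodule.span ℂ (gen G F) := by
  obtain ⟨N, hN⟩ := blue_bound hfin h31
  obtain ⟨t, ht, hsum⟩ := ck4' F hfin (G.s p) (N, 0) (isVertex_s p)
  have key : F.S p = ∑ lam ∈ t, F.S (G.comp p lam) * star (F.S lam) := by
    conv_lhs => rw [← S_mul_s F p, hsum, Finset.mul_sum]
    refine Finset.sum_congr rfl (fun lam hlam => ?_)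
    rw [← mul_assoc, F.ck2 p lam ((ht lam).mp hlam).2.symm]
  rw [key]
  refine Submodule.sum_mem _ (fun lam hlam => ?_)
  obtain ⟨hle, hrl⟩ := (ht lam).mp hlam
  have hY : G.InY lam := (mem_LeSet_blue_iff h31 hN lam).mp hle
  obtain ⟨b, ν, hdb, hdν, hsr, hcomp⟩ := factor' (G.comp p lam)
    ((G.d (G.comp p lam)).1, 0) (0, (G.d (G.comp p lam)).2)
    (prodext (by simp) (by simp))
  have hsν : G.s ν = G.s lam := by
    rw [← G.s_comp b ν hsr, hcomp, G.s_comp p lam hrl.symm]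
  have hbs : G.IsBlueSource (G.s ν) := by rw [hsν]; exact hY.2
  have hrν : G.IsBlueSource (G.r ν) :=
    blueSource_r_of_red h31 (by rw [TwoGraph.IsRed, hdν]) hbs
  have hterm : F.S (G.comp p lam) * star (F.S lam) = F.S b * F.S ν * star (F.S lam) := by
    rw [F.ck2 b ν hsr, hcomp]
  rw [hterm]
  exact Submodule.subset_span ⟨b, lam, ν,
    ⟨by rw [TwoGraph.IsBlue, hdb], by rw [hsr]; exact hrν⟩,
    hY, by rw [TwoGraph.IsRed, hdν], hrν, hbs, Or.inl rfl⟩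

end Stmt3Aux
namespace Stmt3Aux

variable {A : Type*} [CStarAlgebra A] {G : TwoGraph} (F : CKFamily G A)

lemma star_mem_span {x : A} (hx : x ∈ Submodule.span ℂ (gen G F)) :
    star x ∈ Submodule.span ℂ (gen G F) := by
  induction hx using Submodule.span_induction with
  | mem g hg => exact Submodule.subset_span (gen_star F hg)
  | zero => rw [star_zero]; exact Submodule.zero_mem _
  | add a b ha hb iha ihb => rw [star_add]; exact Submodule.add_mem _ iha ihb
  | smul c a ha iha => rw [star_smul]; exact Submodule.smul_mem _ _ iha

lemma mul_mem_span (hfin : G.FinitePaths) (h31 : G.Cond31) {x y : A}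
    (hx : x ∈ Submodule.span ℂ (gen G F)) (hy : y ∈ Submodule.span ℂ (gen G F)) :
    x * y ∈ Submodule.span ℂ (gen G F) := by
  induction hx, hy using Submodule.span_induction₂ with
  | mem_mem a b ha hb => exact gen_mul_gen F hfin h31 ha hb
  | zero_left b hb => rw [zero_mul]; exact Submodule.zero_mem _
  | zero_right a ha => rw [mul_zero]; exact Submodule.zero_mem _
  | add_left a b c ha hb hc ih1 ih2 => rw [add_mul]; exact Submodule.add_mem _ ih1 ih2
  | add_right a b c ha hb hc ih1 ih2 => rw [mul_add]; exact Submodule.add_mem _ ih1 ih2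
  | smul_left r a b ha hb ih => rw [smul_mul_assoc]; exact Submodule.smul_mem _ _ ih
  | smul_right r a b ha hb ih => rw [mul_smul_comm]; exact Submodule.smul_mem _ _ ih

/-- The span of the generators, as a non-unital star subalgebra. -/
noncomputable def SA (hfin : G.FinitePaths) (h31 : G.Cond31) :
    NonUnitalStarSubalgebra ℂ A where
  carrier := (Submodule.span ℂ (gen G F) : Set A)
  add_mem' := fun hx hy => Submodule.add_mem _ hx hy
  zero_mem' := Submodule.zero_mem _
  mul_mem' := fun hx hy => mul_mem_span F hfin h31 hx hy
  smul_mem' := fun c x hx => Submodule.smul_mem _ c hx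
  star_mem' := fun hx => star_mem_span F hx

end Stmt3Aux
/-- For a finite 2-graph satisfying (3.1), the C*-algebra generated by a
Cuntz–Krieger family is the closed linear span of the elements
`s_α s_ν s_β*`, `s_α s_ν* s_β*` with `α, β ∈ Y` and `ν ∈ S (red Λ) S`. -/
theorem stmt3 {A : Type*} [CStarAlgebra A]
    (G : TwoGraph) (hfin : G.FinitePaths) (h31 : G.Cond31) (F : CKFamily G A) :
    generatedCStar (Set.range F.S) =
      closure (↑(Submodule.span ℂ
        {x : A | ∃ α β ν, G.InY α ∧ G.InY β ∧ G.IsRed ν ∧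
          G.IsBlueSource (G.r ν) ∧ G.IsBlueSource (G.s ν) ∧
          (x = F.S α * F.S ν * star (F.S β) ∨
           x = F.S α * star (F.S ν) * star (F.S β))}) : Set A) := by
  classical
  open Stmt3Aux in
  show generatedCStar (Set.range F.S) =
    closure ((Submodule.span ℂ (Stmt3Aux.gen G F) : Set A))
  apply Set.Subset.antisymm
  · -- the generated C*-algebra is contained in the closed span
    have hK : NonUnitalStarAlgebra.adjoin ℂ (Set.range F.S) ≤
        (Stmt3Aux.SA F hfin h31).topologicalClosure := by
      apply NonUnitalStarAlgebra.adjoin_le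
      rintro x ⟨p, rfl⟩
      exact subset_closure (Stmt3Aux.S_mem_span F hfin h31 p)
    have h2 : (NonUnitalStarAlgebra.adjoin ℂ (Set.range F.S) : Set A) ⊆
        closure ((Submodule.span ℂ (Stmt3Aux.gen G F) : Set A)) := fun y hy => hK hy
    exact closure_minimal h2 isClosed_closure
  · -- the closed span is contained in the generated C*-algebra
    apply closure_mono
    intro x hx
    induction hx using Submodule.span_induction with
    | mem g hg =>
      obtain ⟨α, β, ν, -, -, -, -, -, hf⟩ := hg
      have h1 : F.S α ∈ NonUnitalStarAlgebra.adjoin ℂ (Set.range F.S) :=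
        NonUnitalStarAlgebra.subset_adjoin ℂ _ ⟨α, rfl⟩
      have h2 : F.S ν ∈ NonUnitalStarAlgebra.adjoin ℂ (Set.range F.S) :=
        NonUnitalStarAlgebra.subset_adjoin ℂ _ ⟨ν, rfl⟩
      have h3 : F.S β ∈ NonUnitalStarAlgebra.adjoin ℂ (Set.range F.S) :=
        NonUnitalStarAlgebra.subset_adjoin ℂ _ ⟨β, rfl⟩
      rcases hf with rfl | rfl
      · exact mul_mem (mul_mem h1 h2) (star_mem h3)
      · exact mul_mem (mul_mem h1 (star_mem h2)) (star_mem h3)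
    | zero => exact zero_mem _
    | add a b ha hb iha ihb => exact add_mem iha ihb
    | smul c a ha iha => exact SMulMemClass.smul_mem c iha
end
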